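/- arXiv:2309.06434 — 6 statements merged into one kernel-verified Lean document; each statement's English description precedes it below -/
import Mathlib

section
/- Let ρ ∈ ℝ and R > 1. If σ ≥ R^{ρ-1}((ln R)^{-1} + (1-ρ))/2, then for all u in the weighted Sobolev space H¹((R,∞), r^ρ dr), one has ∫_R^∞ ((ρ-1)²/(4r²) + 1/(4r²(ln r)²)) |u(r)|² r^ρ dr ≤ ∫_R^∞ |u'(r)|² r^ρ dr + σ |u(R)|². -/
open MeasureTheory Set Real

noncomputable def rhF (ρ x : ℝ) : ℝ := (1 - ρ) / (2 * x) + 1 / (2 * x * Real.log x)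

noncomputable def rhE (ρ x : ℝ) : ℝ :=
  -((ρ-1)^2/2) * x ^ (ρ-2) + ((ρ-1)/2) * x ^ (ρ-2) / Real.log x
    - x ^ (ρ-2) / (2 * (Real.log x)^2)

lemma rh_cont_rpow (ρ : ℝ) : ContinuousOn (fun x : ℝ => x ^ ρ) (Ioi 1) := fun x hx =>
  (Real.continuousAt_rpow_const x ρ (Or.inl (by have : (1:ℝ) < x := hx; positivity))).continuousWithinAt

lemma rh_cont_log : ContinuousOn Real.log (Ioi (1:ℝ)) := fun x hx =>
  (Real.continuousAt_log (by have : (1:ℝ) < x := hx; positivity)).continuousWithinAt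

lemma rh_log_ne (x : ℝ) (hx : x ∈ Ioi (1:ℝ)) : Real.log x ≠ 0 := (Real.log_pos hx).ne'

lemma rh_cont_rhF (ρ : ℝ) : ContinuousOn (rhF ρ) (Ioi 1) := by
  unfold rhF
  apply ContinuousOn.add
  · exact continuousOn_const.div (continuous_const.mul continuous_id).continuousOn
      (fun x hx => by have : (1:ℝ) < x := hx; positivity)
  · exact continuousOn_const.div
      ((continuous_const.mul continuous_id).continuousOn.mul rh_cont_log)
      (fun x hx => by
        have h1 : (1:ℝ) < x := hx
        have h2 := Real.log_pos h1
        positivity)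

lemma rh_cont_rhE (ρ : ℝ) : ContinuousOn (rhE ρ) (Ioi 1) := by
  unfold rhE
  apply ContinuousOn.sub
  · apply ContinuousOn.add
    · exact continuousOn_const.mul (rh_cont_rpow (ρ-2))
    · exact (continuousOn_const.mul (rh_cont_rpow (ρ-2))).div rh_cont_log rh_log_ne
  · exact (rh_cont_rpow (ρ-2)).div (continuousOn_const.mul (rh_cont_log.pow 2))
      (fun x hx => by
        have h1 : (1:ℝ) < x := hx
        have h2 := Real.log_pos h1
        positivity)

lemma rh_rpow_sub2 {x : ℝ} (hx0 : 0 < x) (ρ : ℝ) : x ^ (ρ-2) = x ^ ρ / x^2 := by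
  rw [Real.rpow_sub hx0]
  norm_num [Real.rpow_two]

lemma rhφ_deriv (ρ : ℝ) {x : ℝ} (hx : 1 < x) :
    HasDerivAt (fun y => rhF ρ y * y ^ ρ) (rhE ρ x) x := by
  have hx0 : (0:ℝ) < x := lt_trans zero_lt_one hx
  have hlog : Real.log x ≠ 0 := (Real.log_pos hx).ne'
  have h1 : HasDerivAt (fun y : ℝ => 2 * y) 2 x := by
    simpa using (hasDerivAt_id x).const_mul 2
  have h2 := (hasDerivAt_const x (1-ρ)).div h1 (by positivity)
  have h3 : HasDerivAt (fun y : ℝ => 2 * y * Real.log y) (2 * Real.log x + (2*x) * x⁻¹) x :=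
    h1.mul (Real.hasDerivAt_log hx0.ne')
  have h4 := (hasDerivAt_const x (1:ℝ)).div h3 (by
    have := Real.log_pos hx; positivity)
  have h5 : HasDerivAt (fun y : ℝ => y ^ ρ) (ρ * x ^ (ρ-1)) x :=
    Real.hasDerivAt_rpow_const (Or.inl hx0.ne')
  have h6 := (h2.add h4).mul h5
  have h7 : HasDerivAt (fun y => rhF ρ y * y ^ ρ) _ x := h6
  convert h7 using 1
  have e1 : x ^ (ρ-1) = x ^ ρ / x := by rw [Real.rpow_sub hx0, Real.rpow_one]
  have e2 := rh_rpow_sub2 hx0 ρ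
  unfold rhE
  rw [e1, e2]
  simp only [Pi.add_apply, Pi.div_apply]
  field_simp
  ring

lemma rh_key (ρ : ℝ) {x : ℝ} (hx : 1 < x) (a b : ℝ) :
    ((ρ - 1)^2 / (4 * x^2) + 1 / (4 * x^2 * (Real.log x)^2)) * a^2 * x ^ ρ
      = b^2 * x ^ ρ - (b - rhF ρ x * a)^2 * x ^ ρ
        - (rhE ρ x * a^2 + (rhF ρ x * x ^ ρ) * (2 * a * b)) := by
  have hx0 : (0:ℝ) < x := lt_trans zero_lt_one hx
  have hlog : Real.log x ≠ 0 := (Real.log_pos hx).ne'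
  have e2 := rh_rpow_sub2 hx0 ρ
  unfold rhF rhE
  rw [e2]
  field_simp
  ring

lemma rh_finite (ρ R : ℝ) (hR : 1 < R) (u : ℝ → ℝ) (hu : ContDiffOn ℝ 1 u (Ici R))
    {T : ℝ} (hT : R < T) :
    ∫ x in Ioc R T, ((ρ-1)^2/(4*x^2) + 1/(4*x^2*(Real.log x)^2)) * (u x)^2 * x ^ ρ
      ≤ (∫ x in Ioc R T, (derivWithin u (Ici R) x)^2 * x ^ ρ)
        + (rhF ρ R * R ^ ρ * (u R)^2 - rhF ρ T * T ^ ρ * (u T)^2) := by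
  set v := derivWithin u (Ici R) with hv
  have hvc : ContinuousOn v (Ici R) := hu.continuousOn_derivWithin (uniqueDiffOn_Ici R) le_rfl
  have huc : ContinuousOn u (Ici R) := hu.continuousOn
  have hIcc : Icc R T ⊆ Ici R := Icc_subset_Ici_self
  have hIcc1 : Icc R T ⊆ Ioi 1 := fun x hx => lt_of_lt_of_le hR hx.1
  have hIoc1 : Ioc R T ⊆ Ioi 1 := Ioc_subset_Icc_self.trans hIcc1
  set g : ℝ → ℝ := fun x => rhF ρ x * x ^ ρ * (u x)^2 with hgdef
  set G' : ℝ → ℝ := fun x => rhE ρ x * (u x)^2 + (rhF ρ x * x ^ ρ) * (2 * u x * v x) with hG'def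
  have hux : ∀ x ∈ Ioi R, HasDerivAt u (v x) x := fun x hx =>
    ((hu.differentiableOn one_ne_zero) x (mem_Ici.2 (le_of_lt hx))).hasDerivWithinAt.hasDerivAt (Ici_mem_nhds hx)
  have hder : ∀ x ∈ Ioo R T, HasDerivAt g (G' x) x := by
    intro x hx
    have h1 := (rhφ_deriv ρ (lt_trans hR hx.1)).mul ((hux x hx.1).pow 2)
    rw [hgdef]
    refine h1.congr_deriv ?_
    simp only [hG'def, Pi.pow_apply]
    push_cast
    ring
  have hg_cont : ContinuousOn g (Icc R T) :=
    (((rh_cont_rhF ρ).mono hIcc1).mul ((rh_cont_rpow ρ).mono hIcc1)).mul ((huc.mono hIcc).pow 2)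
  have hG'c : ContinuousOn G' (Icc R T) :=
    (((rh_cont_rhE ρ).mono hIcc1).mul ((huc.mono hIcc).pow 2)).add
      ((((rh_cont_rhF ρ).mono hIcc1).mul ((rh_cont_rpow ρ).mono hIcc1)).mul
        ((continuousOn_const.mul (huc.mono hIcc)).mul (hvc.mono hIcc)))
  have hG'i : IntervalIntegrable G' volume R T := by
    apply ContinuousOn.intervalIntegrable
    rwa [Set.uIcc_of_le hT.le]
  have hftc : ∫ y in R..T, G' y = g T - g R :=
    intervalIntegral.integral_eq_sub_of_hasDeriv_right_of_le hT.le hg_cont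
      (fun x hx => (hder x hx).hasDerivWithinAt) hG'i
  rw [intervalIntegral.integral_of_le hT.le] at hftc
  set A : ℝ → ℝ := fun x => (v x)^2 * x ^ ρ with hA
  set B : ℝ → ℝ := fun x => (v x - rhF ρ x * u x)^2 * x ^ ρ with hB
  have hIntA : IntegrableOn A (Ioc R T) :=
    ((((hvc.mono hIcc).pow 2).mul ((rh_cont_rpow ρ).mono hIcc1)).integrableOn_Icc).mono_set
      Ioc_subset_Icc_self
  have hIntB : IntegrableOn B (Ioc R T) :=
    (((((hvc.mono hIcc).sub (((rh_cont_rhF ρ).mono hIcc1).mul (huc.mono hIcc))).pow 2).mul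
      ((rh_cont_rpow ρ).mono hIcc1)).integrableOn_Icc).mono_set Ioc_subset_Icc_self
  have hIntG' : IntegrableOn G' (Ioc R T) :=
    (hG'c.integrableOn_Icc).mono_set Ioc_subset_Icc_self
  have hcongr : ∫ x in Ioc R T, ((ρ-1)^2/(4*x^2) + 1/(4*x^2*(Real.log x)^2)) * (u x)^2 * x ^ ρ
      = ∫ x in Ioc R T, (A x - B x - G' x) := by
    apply setIntegral_congr_fun measurableSet_Ioc
    intro x hx
    exact rh_key ρ (hIoc1 hx) (u x) (v x)
  have hAB : IntegrableOn (fun x => A x - B x) (Ioc R T) := hIntA.sub hIntB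
  have hsub : ∫ x in Ioc R T, (A x - B x - G' x)
      = (∫ x in Ioc R T, A x) - (∫ x in Ioc R T, B x) - (∫ x in Ioc R T, G' x) := by
    rw [integral_sub hAB hIntG', integral_sub hIntA hIntB]
  rw [hcongr, hsub, hftc]
  have hB0 : 0 ≤ ∫ x in Ioc R T, B x := by
    apply setIntegral_nonneg measurableSet_Ioc
    intro x hx
    have hx0 : (0:ℝ) ≤ x := le_of_lt (lt_trans zero_lt_one (hIoc1 hx))
    exact mul_nonneg (sq_nonneg _) (Real.rpow_nonneg hx0 _)
  have hgR : g R = rhF ρ R * R ^ ρ * (u R)^2 := rfl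
  have hgT : g T = rhF ρ T * T ^ ρ * (u T)^2 := rfl
  rw [hgR, hgT]
  linarith

lemma rh_bound (ρ R : ℝ) (hR : 1 < R) {T : ℝ} (hT : R ≤ T) :
    |rhF ρ T * T ^ ρ| ≤ (|1-ρ|/2 + 1/(2*Real.log R)) * (T ^ ρ / T) := by
  have hT1 : 1 < T := lt_of_lt_of_le hR hT
  have hT0 : (0:ℝ) < T := by linarith
  have hlT : 0 < Real.log T := Real.log_pos hT1
  have hlR : 0 < Real.log R := Real.log_pos hR
  have hlRT : Real.log R ≤ Real.log T := Real.log_le_log (by linarith) hT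
  have hp : 0 < T ^ ρ := Real.rpow_pos_of_pos hT0 ρ
  rw [abs_mul, abs_of_pos hp]
  have h1 : |rhF ρ T| ≤ (|1-ρ|/2 + 1/(2*Real.log R)) / T := by
    unfold rhF
    refine le_trans (abs_add_le _ _) ?_
    have e1 : |(1-ρ)/(2*T)| = |1-ρ|/(2*T) := by
      rw [abs_div, abs_of_pos (by positivity : (0:ℝ) < 2*T)]
    have e2 : |1/(2*T*Real.log T)| = 1/(2*T*Real.log T) := abs_of_pos (by positivity)
    have e3 : (|1-ρ|/2 + 1/(2*Real.log R)) / T = |1-ρ|/(2*T) + 1/(2*T*Real.log R) := by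
      field_simp
    rw [e1, e2, e3]
    gcongr
  calc |rhF ρ T| * T^ρ ≤ ((|1-ρ|/2 + 1/(2*Real.log R)) / T) * T^ρ :=
        mul_le_mul_of_nonneg_right h1 hp.le
    _ = (|1-ρ|/2 + 1/(2*Real.log R)) * (T^ρ/T) := by ring

lemma rh_escape (ρ R : ℝ) (hR : 1 < R) (u : ℝ → ℝ)
    (hu2 : IntegrableOn (fun r => |u r|^2 * r ^ ρ) (Ioi R))
    {ε : ℝ} (hε : 0 < ε) (M : ℝ) :
    ∃ T, M ≤ T ∧ R + 1 ≤ T ∧ (u T)^2 * T ^ ρ ≤ ε * T := by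
  by_contra h
  push_neg at h
  set M' := max M (R+1) with hM'
  have hM'R : R + 1 ≤ M' := le_max_right _ _
  have hM'0 : 0 < M' := by linarith [le_max_right M (R+1)]
  have hsub : Ioi M' ⊆ Ioi R := Ioi_subset_Ioi (by linarith)
  have hc : IntegrableOn (fun _ : ℝ => ε * M') (Ioi M') volume := by
    apply Integrable.mono' (hu2.mono_set hsub) aestronglyMeasurable_const
    filter_upwards [ae_restrict_mem measurableSet_Ioi] with x hx
    have hx' : M' < x := hx
    have h1 : ε * x < (u x)^2 * x ^ ρ :=
      h x (le_trans (le_max_left _ _) hx'.le) (le_trans hM'R hx'.le)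
    have : ‖ε * M'‖ = ε * M' := abs_of_pos (by positivity)
    rw [this, sq_abs]
    nlinarith
  rcases (integrableOn_const_iff).1 hc with h0 | hfin
  · have := enorm_eq_zero.1 h0; nlinarith
  · rw [Real.volume_Ioi] at hfin
    exact absurd hfin (by simp)

/-- Robin–Hardy inequality with logarithmic refinement on the weighted half-line. -/
theorem robin_hardy_log (ρ : ℝ) (R : ℝ) (hR : 1 < R) (σ : ℝ)
    (hσ : R ^ (ρ - 1) * ((Real.log R)⁻¹ + (1 - ρ)) / 2 ≤ σ)
    (u : ℝ → ℝ) (hu : ContDiffOn ℝ 1 u (Ici R))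
    (hu2 : IntegrableOn (fun r => |u r|^2 * r ^ ρ) (Ioi R))
    (hu'2 : IntegrableOn (fun r => |deriv u r|^2 * r ^ ρ) (Ioi R)) :
    ∫ r in Ioi R, ((ρ - 1)^2 / (4 * r^2) + 1 / (4 * r^2 * (Real.log r)^2)) * |u r|^2 * r ^ ρ
      ≤ (∫ r in Ioi R, |deriv u r|^2 * r ^ ρ) + σ * |u R|^2 := by
  have hR0 : (0:ℝ) < R := by linarith
  have hlR : 0 < Real.log R := Real.log_pos hR
  set v := derivWithin u (Ici R) with hv
  set w : ℝ → ℝ := fun x =>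
    ((ρ-1)^2/(4*x^2) + 1/(4*x^2*(Real.log x)^2)) * (u x)^2 * x ^ ρ with hw
  have huc : ContinuousOn u (Ici R) := hu.continuousOn
  have hIoi1 : Ioi R ⊆ Ioi (1:ℝ) := Ioi_subset_Ioi hR.le
  have hIoiI : Ioi R ⊆ Ici R := Ioi_subset_Ici_self
  -- rewrite the goal integrals
  have hgoal1 : ∫ r in Ioi R, ((ρ - 1)^2 / (4 * r^2) + 1 / (4 * r^2 * (Real.log r)^2))
      * |u r|^2 * r ^ ρ = ∫ r in Ioi R, w r := by
    apply setIntegral_congr_fun measurableSet_Ioi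
    intro x _
    simp [hw, sq_abs]
  have hgoal2 : ∫ r in Ioi R, |deriv u r|^2 * r ^ ρ = ∫ r in Ioi R, (v r)^2 * r ^ ρ := by
    apply setIntegral_congr_fun measurableSet_Ioi
    intro x hx
    show |deriv u x|^2 * x ^ ρ = (derivWithin u (Ici R) x)^2 * x ^ ρ
    rw [derivWithin_of_mem_nhds (Ici_mem_nhds hx), sq_abs]
  rw [hgoal1, hgoal2, sq_abs]
  -- integrability of v² and w
  have hvint : IntegrableOn (fun r => (v r)^2 * r ^ ρ) (Ioi R) := by
    apply hu'2.congr_fun _ measurableSet_Ioi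
    intro x hx
    show |deriv u x|^2 * x ^ ρ = (derivWithin u (Ici R) x)^2 * x ^ ρ
    rw [derivWithin_of_mem_nhds (Ici_mem_nhds hx), sq_abs]
  have hvpos : ∀ x ∈ Ioi R, (0:ℝ) ≤ (v x)^2 * x ^ ρ := by
    intro x hx
    have hx0 : (0:ℝ) ≤ x := by have := hIoi1 hx; simp at this; linarith
    exact mul_nonneg (sq_nonneg _) (Real.rpow_nonneg hx0 _)
  set C₂ : ℝ := (ρ-1)^2/4 + 1/(4*(Real.log R)^2) with hC₂
  have hwbound : ∀ x ∈ Ioi R, w x ≤ C₂ * (|u x|^2 * x ^ ρ) ∧ 0 ≤ w x := by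
    intro x hx
    have hx1 : (1:ℝ) < x := hIoi1 hx
    have hx0 : (0:ℝ) < x := by linarith
    have hlx : Real.log R ≤ Real.log x := Real.log_le_log hR0 (le_of_lt hx)
    have hlx0 : 0 < Real.log x := Real.log_pos hx1
    have hp : 0 < x ^ ρ := Real.rpow_pos_of_pos hx0 ρ
    have hVb : (ρ-1)^2/(4*x^2) + 1/(4*x^2*(Real.log x)^2) ≤ C₂ := by
      rw [hC₂]
      have h1 : (ρ-1)^2/(4*x^2) ≤ (ρ-1)^2/4 := by
        apply div_le_div_of_nonneg_left (sq_nonneg _) (by norm_num) ?_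
        nlinarith
      have h2 : 1/(4*x^2*(Real.log x)^2) ≤ 1/(4*(Real.log R)^2) := by
        apply one_div_le_one_div_of_le (by positivity)
        have hll : (Real.log R)^2 ≤ (Real.log x)^2 := by nlinarith
        have hx2 : (1:ℝ) ≤ x^2 := by nlinarith
        nlinarith [sq_nonneg (Real.log x)]
      linarith
    have hV0 : 0 ≤ (ρ-1)^2/(4*x^2) + 1/(4*x^2*(Real.log x)^2) := by positivity
    constructor
    · simp only [hw, sq_abs]
      calc ((ρ-1)^2/(4*x^2) + 1/(4*x^2*(Real.log x)^2)) * (u x)^2 * x ^ ρ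
          = ((ρ-1)^2/(4*x^2) + 1/(4*x^2*(Real.log x)^2)) * ((u x)^2 * x ^ ρ) := by ring
        _ ≤ C₂ * ((u x)^2 * x ^ ρ) :=
            mul_le_mul_of_nonneg_right hVb (by positivity)
    · simp only [hw]
      positivity
  have hwint : IntegrableOn w (Ioi R) := by
    apply Integrable.mono' (hu2.const_mul C₂)
    · apply ContinuousOn.aestronglyMeasurable _ measurableSet_Ioi
      rw [hw]
      apply ContinuousOn.mul
      apply ContinuousOn.mul
      · apply ContinuousOn.add
        · exact (continuousOn_const.div
            (continuous_const.mul (continuous_pow 2)).continuousOn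
            (fun x hx => by have : (1:ℝ) < x := hIoi1 hx; positivity))
        · exact continuousOn_const.div
            ((continuous_const.mul (continuous_pow 2)).continuousOn.mul
              ((rh_cont_log.mono hIoi1).pow 2))
            (fun x hx => by
              have h1 : (1:ℝ) < x := hIoi1 hx
              have h2 := Real.log_pos h1
              positivity)
      · exact ((huc.mono hIoiI).pow 2)
      · exact (rh_cont_rpow ρ).mono hIoi1
    · filter_upwards [ae_restrict_mem measurableSet_Ioi] with x hx
      have := hwbound x hx
      rw [Real.norm_eq_abs, abs_of_nonneg this.2]
      exact this.1
  -- tail limit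
  have hU : ⋃ T : ℝ, Ioc R T = Ioi R := by
    ext x
    simp only [mem_iUnion, mem_Ioc, mem_Ioi]
    exact ⟨fun ⟨T, h⟩ => h.1, fun h => ⟨x, h, le_rfl⟩⟩
  have hTail : Filter.Tendsto (fun T : ℝ => ∫ x in Ioc R T, w x) Filter.atTop
      (nhds (∫ x in Ioi R, w x)) := by
    have := tendsto_setIntegral_of_monotone (fun T : ℝ => measurableSet_Ioc)
      (fun a b hab => Ioc_subset_Ioc_right hab) (hU ▸ hwint)
    rwa [hU] at this
  -- boundary term at R
  have hgR : rhF ρ R * R ^ ρ = R ^ (ρ-1) * ((Real.log R)⁻¹ + (1-ρ)) / 2 := by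
    unfold rhF
    rw [Real.rpow_sub hR0, Real.rpow_one]
    field_simp
    ring
  set C : ℝ := |1-ρ|/2 + 1/(2*Real.log R) with hC
  have hC0 : 0 < C := by positivity
  -- main ε-argument
  by_contra hlt
  push_neg at hlt
  set L := ∫ x in Ioi R, w x with hL
  set Rhs := (∫ r in Ioi R, (v r)^2 * r ^ ρ) + σ * (u R)^2 with hRhs
  set ε := (L - Rhs)/2 with hε
  have hε0 : 0 < ε := by rw [hε]; linarith
  rw [Metric.tendsto_atTop] at hTail
  obtain ⟨T₀, hT₀⟩ := hTail (ε/2) (by positivity)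
  obtain ⟨T, hT1, hT2, hT3⟩ := rh_escape ρ R hR u hu2
    (show (0:ℝ) < ε/(2*C) by positivity) (max T₀ (R+1))
  have hTT₀ : T₀ ≤ T := le_trans (le_max_left _ _) hT1
  have hRT : R < T := by linarith
  have hT0' : (0:ℝ) < T := by linarith
  -- tail bound
  have h1 : L - ε/2 ≤ ∫ x in Ioc R T, w x := by
    have := hT₀ T hTT₀
    rw [Real.dist_eq, abs_lt] at this
    linarith [this.1]
  -- finite inequality
  have h2 := rh_finite ρ R hR u hu hRT
  -- monotone bound for gradient term
  have h3 : ∫ x in Ioc R T, (v x)^2 * x ^ ρ ≤ ∫ x in Ioi R, (v x)^2 * x ^ ρ := by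
    apply setIntegral_mono_set hvint
    · filter_upwards [ae_restrict_mem measurableSet_Ioi] with x hx using hvpos x hx
    · exact HasSubset.Subset.eventuallyLE Ioc_subset_Ioi_self
  -- boundary bounds
  have h4 : rhF ρ R * R ^ ρ * (u R)^2 ≤ σ * (u R)^2 := by
    rw [hgR]
    exact mul_le_mul_of_nonneg_right hσ (sq_nonneg _)
  have h5 : -(rhF ρ T * T ^ ρ * (u T)^2) ≤ ε/2 := by
    have hb := rh_bound ρ R hR hRT.le
    have hup : 0 < T ^ ρ := Real.rpow_pos_of_pos hT0' ρ
    have habs : |rhF ρ T * T ^ ρ * (u T)^2| ≤ C * ((u T)^2 * T ^ ρ / T) := by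
      rw [abs_mul, abs_of_nonneg (sq_nonneg (u T))]
      calc |rhF ρ T * T ^ ρ| * (u T)^2 ≤ (C * (T ^ ρ / T)) * (u T)^2 :=
            mul_le_mul_of_nonneg_right hb (sq_nonneg _)
        _ = C * ((u T)^2 * T ^ ρ / T) := by ring
    have h6 : (u T)^2 * T ^ ρ / T ≤ ε/(2*C) := by
      rw [div_le_iff₀ hT0']
      calc (u T)^2 * T ^ ρ ≤ ε/(2*C) * T := hT3
        _ = ε/(2*C) * T := rfl
    have h7 : C * ((u T)^2 * T ^ ρ / T) ≤ C * (ε/(2*C)) :=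
      mul_le_mul_of_nonneg_left h6 hC0.le
    have h8 : C * (ε/(2*C)) = ε/2 := by
      field_simp
    linarith [neg_abs_le (rhF ρ T * T ^ ρ * (u T)^2), habs]
  -- assemble contradiction
  have : L ≤ Rhs + ε := by
    rw [hRhs]
    linarith
  rw [hε] at this
  linarith
end

section
/- For every ε > 0 there exists a Lipschitz, compactly supported function v : (0,∞) → ℝ, not identically zero, such that ∫_0^∞ (1+ε)|v(t)|²/(4t²) dt > ∫_0^∞ |v'(t)|² dt. -/
open MeasureTheory Set Real

noncomputable def hvfun (η : ℝ) : ℝ → ℝ :=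
  fun t => max 0 (min (min ((2 / Real.sqrt η) * (t - η / 2)) (Real.sqrt (max t η))) (2 - t))

lemma hv_line_ge_sqrt {η : ℝ} (h0 : 0 < η) {t : ℝ} (ht : η ≤ t) :
    Real.sqrt t ≤ (2 / Real.sqrt η) * (t - η / 2) := by
  have hsη : 0 < Real.sqrt η := Real.sqrt_pos.mpr h0
  have ht0 : 0 ≤ t := le_trans h0.le ht
  have h2 : Real.sqrt t * Real.sqrt η ≤ t := by
    calc Real.sqrt t * Real.sqrt η ≤ Real.sqrt t * Real.sqrt t :=
          mul_le_mul_of_nonneg_left (Real.sqrt_le_sqrt ht) (Real.sqrt_nonneg t)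
      _ = t := Real.mul_self_sqrt ht0
  rw [show (2 / Real.sqrt η) * (t - η / 2) = (2 * t - η) / Real.sqrt η by ring,
    le_div_iff₀ hsη]
  linarith

lemma hv_eq_zero_left {η : ℝ} (h0 : 0 < η) (h1 : η < 1) {t : ℝ} (ht : t ≤ η / 2) :
    hvfun η t = 0 := by
  have hsη : 0 < Real.sqrt η := Real.sqrt_pos.mpr h0
  have hline : (2 / Real.sqrt η) * (t - η / 2) ≤ 0 := by
    apply mul_nonpos_of_nonneg_of_nonpos
    · positivity
    · linarith
  have h2t : (0:ℝ) ≤ 2 - t := by linarith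
  unfold hvfun
  rw [min_eq_left (le_trans hline (Real.sqrt_nonneg _)),
    min_eq_left (le_trans hline h2t), max_eq_left hline]

lemma hv_eq_line {η : ℝ} (h0 : 0 < η) (h1 : η < 1) {t : ℝ} (ht1 : η / 2 ≤ t) (ht2 : t ≤ η) :
    hvfun η t = (2 / Real.sqrt η) * (t - η / 2) := by
  have hsη : 0 < Real.sqrt η := Real.sqrt_pos.mpr h0
  have hmax : max t η = η := max_eq_right ht2
  have hline_le : (2 / Real.sqrt η) * (t - η / 2) ≤ Real.sqrt η := by
    have h3 : (2 / Real.sqrt η) * (t - η / 2) ≤ (2 / Real.sqrt η) * (η - η / 2) := by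
      apply mul_le_mul_of_nonneg_left (by linarith) (by positivity)
    have hη : (2 / Real.sqrt η) * (η - η / 2) = Real.sqrt η := by
      rw [show η - η / 2 = η / 2 by ring, div_mul_eq_mul_div, div_eq_iff hsη.ne',
        Real.mul_self_sqrt h0.le]; ring
    linarith
  have hsq1 : Real.sqrt η ≤ 1 := by
    rw [show (1:ℝ) = Real.sqrt 1 by simp]
    exact Real.sqrt_le_sqrt h1.le
  have hline_nonneg : 0 ≤ (2 / Real.sqrt η) * (t - η / 2) := by
    apply mul_nonneg (by positivity) (by linarith)
  unfold hvfun
  rw [hmax, min_eq_left hline_le,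
    min_eq_left (show (2 / Real.sqrt η) * (t - η / 2) ≤ 2 - t by linarith),
    max_eq_right hline_nonneg]

lemma hv_eq_sqrt {η : ℝ} (h0 : 0 < η) {t : ℝ} (ht1 : η ≤ t) (ht2 : t ≤ 1) :
    hvfun η t = Real.sqrt t := by
  have hmax : max t η = t := max_eq_left ht1
  have hsq1 : Real.sqrt t ≤ 1 := by
    rw [show (1:ℝ) = Real.sqrt 1 by simp]
    exact Real.sqrt_le_sqrt ht2
  unfold hvfun
  rw [hmax, min_eq_right (hv_line_ge_sqrt h0 ht1),
    min_eq_left (show Real.sqrt t ≤ 2 - t by linarith),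
    max_eq_right (Real.sqrt_nonneg t)]

lemma hv_eq_aff {η : ℝ} (h0 : 0 < η) (h1 : η < 1) {t : ℝ} (ht1 : 1 ≤ t) (ht2 : t ≤ 2) :
    hvfun η t = 2 - t := by
  have ht0 : η ≤ t := le_trans h1.le ht1
  have hmax : max t η = t := max_eq_left ht0
  have hsq1 : (1:ℝ) ≤ Real.sqrt t := by
    rw [show (1:ℝ) = Real.sqrt 1 by simp]
    exact Real.sqrt_le_sqrt ht1
  unfold hvfun
  rw [hmax, min_eq_right (hv_line_ge_sqrt h0 ht0),
    min_eq_right (show 2 - t ≤ Real.sqrt t by linarith),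
    max_eq_right (show (0:ℝ) ≤ 2 - t by linarith)]

lemma hv_eq_zero_right {η : ℝ} (h0 : 0 < η) (h1 : η < 1) {t : ℝ} (ht : 2 ≤ t) :
    hvfun η t = 0 := by
  have ht0 : η ≤ t := by linarith
  have hmax : max t η = t := max_eq_left ht0
  have hst : 0 ≤ Real.sqrt t := Real.sqrt_nonneg t
  unfold hvfun
  rw [hmax, min_eq_right (hv_line_ge_sqrt h0 ht0),
    min_eq_right (show 2 - t ≤ Real.sqrt t by linarith),
    max_eq_left (show 2 - t ≤ 0 by linarith)]

lemma hv_lipschitz {η : ℝ} (h0 : 0 < η) : ∃ K : NNReal, LipschitzWith K (hvfun η) := by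
  have hsη : 0 < Real.sqrt η := Real.sqrt_pos.mpr h0
  set c : ℝ := 2 / Real.sqrt η with hc
  have hcpos : 0 < c := by positivity
  refine ⟨Real.toNNReal c ⊔ 1, ?_⟩
  have hKc : c ≤ ((Real.toNNReal c ⊔ 1 : NNReal) : ℝ) := by
    simp only [NNReal.coe_max, Real.coe_toNNReal c hcpos.le]
    exact le_max_left _ _
  have hK1 : (1:ℝ) ≤ ((Real.toNNReal c ⊔ 1 : NNReal) : ℝ) := by
    simp only [NNReal.coe_max, NNReal.coe_one]
    exact le_max_right _ _
  set K := Real.toNNReal c ⊔ 1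
  have hline : LipschitzWith K (fun t => c * (t - η / 2)) := by
    apply LipschitzWith.of_dist_le_mul
    intro x y
    rw [Real.dist_eq, Real.dist_eq]
    have h3 : c * (x - η / 2) - c * (y - η / 2) = c * (x - y) := by ring
    rw [h3, abs_mul, abs_of_pos hcpos]
    exact mul_le_mul_of_nonneg_right hKc (abs_nonneg _)
  have hsqrtdiff : ∀ a b : ℝ, η ≤ b → b ≤ a → Real.sqrt a - Real.sqrt b ≤ c * (a - b) := by
    intro a b hb hba
    have ha0 : 0 ≤ a := le_trans h0.le (le_trans hb hba)
    have hb0 : 0 ≤ b := le_trans h0.le hb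
    have hsb : Real.sqrt η ≤ Real.sqrt b := Real.sqrt_le_sqrt hb
    have hsab : Real.sqrt b ≤ Real.sqrt a := Real.sqrt_le_sqrt hba
    have hfact : (Real.sqrt a - Real.sqrt b) * (Real.sqrt a + Real.sqrt b) = a - b := by
      have h4 := Real.mul_self_sqrt ha0
      have h5 := Real.mul_self_sqrt hb0
      nlinarith
    have h2 : (Real.sqrt a - Real.sqrt b) * Real.sqrt η ≤ a - b := by
      calc (Real.sqrt a - Real.sqrt b) * Real.sqrt η
          ≤ (Real.sqrt a - Real.sqrt b) * (Real.sqrt a + Real.sqrt b) := by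
            apply mul_le_mul_of_nonneg_left _ (by linarith)
            nlinarith [Real.sqrt_nonneg b]
        _ = a - b := hfact
    rw [hc, div_mul_eq_mul_div, le_div_iff₀ hsη]
    nlinarith
  have hs : LipschitzWith K (fun t => Real.sqrt (max t η)) := by
    apply LipschitzWith.of_dist_le_mul
    intro x y
    rw [Real.dist_eq, Real.dist_eq]
    have hmx : η ≤ max x η := le_max_right _ _
    have hmy : η ≤ max y η := le_max_right _ _
    have hmaxle : |max x η - max y η| ≤ |x - y| := abs_max_sub_max_le_abs x y η
    have key : |Real.sqrt (max x η) - Real.sqrt (max y η)| ≤ c * |max x η - max y η| := by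
      rcases le_total (max y η) (max x η) with h | h
      · rw [abs_of_nonneg (by linarith [Real.sqrt_le_sqrt h] :
            (0:ℝ) ≤ Real.sqrt (max x η) - Real.sqrt (max y η)),
          abs_of_nonneg (by linarith : (0:ℝ) ≤ max x η - max y η)]
        exact hsqrtdiff _ _ hmy h
      · rw [abs_sub_comm, abs_sub_comm (max x η),
          abs_of_nonneg (by linarith [Real.sqrt_le_sqrt h] :
            (0:ℝ) ≤ Real.sqrt (max y η) - Real.sqrt (max x η)),
          abs_of_nonneg (by linarith : (0:ℝ) ≤ max y η - max x η)]
        exact hsqrtdiff _ _ hmx h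
    calc |Real.sqrt (max x η) - Real.sqrt (max y η)| ≤ c * |max x η - max y η| := key
      _ ≤ c * |x - y| := mul_le_mul_of_nonneg_left hmaxle hcpos.le
      _ ≤ (K:ℝ) * |x - y| := mul_le_mul_of_nonneg_right hKc (abs_nonneg _)
  have haff : LipschitzWith K (fun t : ℝ => 2 - t) := by
    apply LipschitzWith.of_dist_le_mul
    intro x y
    rw [Real.dist_eq, Real.dist_eq]
    have h3 : (2 - x) - (2 - y) = -(x - y) := by ring
    rw [h3, abs_neg]
    nlinarith [abs_nonneg (x - y)]
  have hmin1 : LipschitzWith K (fun t => min (c * (t - η / 2)) (Real.sqrt (max t η))) := by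
    simpa [max_self] using hline.min hs
  have hmin2 : LipschitzWith K
      (fun t => min (min (c * (t - η / 2)) (Real.sqrt (max t η))) (2 - t)) := by
    simpa [max_self] using hmin1.min haff
  exact hmin2.const_max 0

/-- Sharpness of the constant 1/4 in the one-dimensional Hardy inequality. -/
theorem hardy_constant_sharp (ε : ℝ) (hε : 0 < ε) :
    ∃ v : ℝ → ℝ, (∃ K : NNReal, LipschitzWith K v) ∧ HasCompactSupport v ∧
      tsupport v ⊆ Ioi 0 ∧ v ≠ 0 ∧
      (∫ t in Ioi (0:ℝ), (deriv v t)^2)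
        < ∫ t in Ioi (0:ℝ), (1 + ε) * |v t|^2 / (4 * t^2) := by
  set L : ℝ := 12 / ε + 1 with hL
  have hLpos : 0 < L := by positivity
  set η : ℝ := Real.exp (-L) with hη
  have h0 : 0 < η := Real.exp_pos _
  have h1 : η < 1 := Real.exp_lt_one_iff.mpr (by linarith)
  have hlogη : Real.log η = -L := Real.log_exp _
  set v := hvfun η with hvdef
  have hlip := hv_lipschitz h0
  have hcont : Continuous v := by
    obtain ⟨K, hK⟩ := hlip
    exact hK.continuous
  -- support facts
  have hsupp : ∀ x, x ∉ Icc (η/2) 2 → v x = 0 := by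
    intro x hx
    simp only [mem_Icc, not_and_or, not_le] at hx
    rcases hx with hx | hx
    · exact hv_eq_zero_left h0 h1 hx.le
    · exact hv_eq_zero_right h0 h1 hx.le
  have hcompact : HasCompactSupport v := HasCompactSupport.intro isCompact_Icc hsupp
  have htsupp : tsupport v ⊆ Ioi 0 := by
    have h2 : tsupport v ⊆ Icc (η/2) 2 := by
      apply closure_minimal _ isClosed_Icc
      intro x hx
      by_contra hxn
      exact hx (hsupp x hxn)
    exact h2.trans (fun x hx => lt_of_lt_of_le (by linarith : (0:ℝ) < η/2) hx.1)
  have hne : v ≠ 0 := by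
    intro hcon
    have h12 : v 1 = Real.sqrt 1 := hv_eq_sqrt h0 h1.le le_rfl
    rw [hcon] at h12
    simp at h12
  -- derivative values
  have hderiv_zero_left : ∀ t ∈ Ioo (0:ℝ) (η/2), deriv v t = 0 := by
    intro t ht
    have hev : v =ᶠ[nhds t] fun _ => 0 :=
      Filter.eventually_of_mem (Iio_mem_nhds ht.2) (fun x hx => hv_eq_zero_left h0 h1 (le_of_lt hx))
    rw [hev.deriv_eq]
    exact deriv_const t 0
  have hderiv_line : ∀ t ∈ Ioo (η/2) η, deriv v t = 2 / Real.sqrt η := by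
    intro t ht
    have hev : v =ᶠ[nhds t] fun x => (2 / Real.sqrt η) * (x - η / 2) :=
      Filter.eventually_of_mem (Ioo_mem_nhds ht.1 ht.2)
        (fun x hx => hv_eq_line h0 h1 hx.1.le hx.2.le)
    rw [hev.deriv_eq]
    have : HasDerivAt (fun x => (2 / Real.sqrt η) * (x - η / 2)) (2 / Real.sqrt η * 1) t :=
      ((hasDerivAt_id t).sub_const (η / 2)).const_mul _
    simpa using this.deriv
  have hderiv_sqrt : ∀ t ∈ Ioo η 1, deriv v t = 1 / (2 * Real.sqrt t) := by
    intro t ht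
    have hev : v =ᶠ[nhds t] Real.sqrt :=
      Filter.eventually_of_mem (Ioo_mem_nhds ht.1 ht.2)
        (fun x hx => hv_eq_sqrt h0 hx.1.le hx.2.le)
    rw [hev.deriv_eq]
    exact (Real.hasDerivAt_sqrt (by linarith [ht.1, h0] : t ≠ 0)).deriv
  have hderiv_aff : ∀ t ∈ Ioo (1:ℝ) 2, deriv v t = -1 := by
    intro t ht
    have hev : v =ᶠ[nhds t] fun x => 2 - x :=
      Filter.eventually_of_mem (Ioo_mem_nhds ht.1 ht.2)
        (fun x hx => hv_eq_aff h0 h1 hx.1.le hx.2.le)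
    rw [hev.deriv_eq]
    have : HasDerivAt (fun x : ℝ => 2 - x) (-1) t := by
      simpa using ((hasDerivAt_id t).const_sub 2)
    exact this.deriv
  have hderiv_zero_right : ∀ t ∈ Ioi (2:ℝ), deriv v t = 0 := by
    intro t ht
    have hev : v =ᶠ[nhds t] fun _ => 0 :=
      Filter.eventually_of_mem (Ioi_mem_nhds ht) (fun x hx => hv_eq_zero_right h0 h1 (le_of_lt hx))
    rw [hev.deriv_eq]
    exact deriv_const t 0
  -- integrability and values of the derivative integral
  set f1 : ℝ → ℝ := fun t => (deriv v t) ^ 2 with hf1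
  have hη2 : (0:ℝ) < η / 2 := by linarith
  have hdisj : ∀ a b : ℝ, Disjoint (Ioc a b) (Ioi b) := by
    intro a b
    exact disjoint_left.mpr (fun x hx hx2 => absurd hx.2 (not_le.mpr hx2))
  have e1 : Ioc (1:ℝ) 2 ∪ Ioi 2 = Ioi 1 := Ioc_union_Ioi_eq_Ioi (by norm_num)
  have e2 : Ioc η 1 ∪ Ioi 1 = Ioi η := Ioc_union_Ioi_eq_Ioi h1.le
  have e3 : Ioc (η/2) η ∪ Ioi η = Ioi (η/2) := Ioc_union_Ioi_eq_Ioi (by linarith)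
  have e4 : Ioc 0 (η/2) ∪ Ioi (η/2) = Ioi 0 := Ioc_union_Ioi_eq_Ioi hη2.le
  -- piece A : (0, η/2]
  have hA_eq : EqOn f1 (fun _ => (0:ℝ)) (Ioo 0 (η/2)) := by
    intro t ht
    simp [hf1, hderiv_zero_left t ht]
  have hIA : IntegrableOn f1 (Ioc 0 (η/2)) := by
    rw [integrableOn_Ioc_iff_integrableOn_Ioo,
      integrableOn_congr_fun hA_eq measurableSet_Ioo]
    exact (integrableOn_const_iff (by simp)).mpr (Or.inl (by simp))
  have hIntA : ∫ t in Ioc 0 (η/2), f1 t = 0 := by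
    rw [integral_Ioc_eq_integral_Ioo, setIntegral_congr_fun measurableSet_Ioo hA_eq]
    simp
  -- piece B : (η/2, η]
  have hB_eq : EqOn f1 (fun _ => 4 / η) (Ioo (η/2) η) := by
    intro t ht
    have : deriv v t = 2 / Real.sqrt η := hderiv_line t ht
    simp only [hf1, this, div_pow]
    rw [Real.sq_sqrt h0.le]
    norm_num
  have hIB : IntegrableOn f1 (Ioc (η/2) η) := by
    rw [integrableOn_Ioc_iff_integrableOn_Ioo,
      integrableOn_congr_fun hB_eq measurableSet_Ioo]
    exact (integrableOn_const_iff (by simp)).mpr (Or.inr (by rw [Real.volume_Ioo]; exact ENNReal.ofReal_lt_top))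
  have hIntB : ∫ t in Ioc (η/2) η, f1 t = 2 := by
    rw [integral_Ioc_eq_integral_Ioo, setIntegral_congr_fun measurableSet_Ioo hB_eq,
      setIntegral_const, Real.volume_real_Ioo_of_le (by linarith), smul_eq_mul]
    field_simp
    ring
  -- piece C : (η, 1]
  have hC_eq : EqOn f1 (fun t => (1/4) * (1/t)) (Ioo η 1) := by
    intro t ht
    have htpos : 0 < t := lt_trans h0 ht.1
    have : deriv v t = 1 / (2 * Real.sqrt t) := hderiv_sqrt t ht
    simp only [hf1, this, div_pow, one_pow, mul_pow]
    rw [Real.sq_sqrt htpos.le]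
    rw [show (2:ℝ)^2 * t = 4 * t by ring]
    rw [div_eq_iff (by positivity : (4:ℝ) * t ≠ 0)]
    field_simp
  have hCcont : ContinuousOn (fun t : ℝ => (1/4) * (1/t)) (Icc η 1) := by
    apply ContinuousOn.mul continuousOn_const
    apply ContinuousOn.div continuousOn_const continuousOn_id
    intro t ht
    exact ne_of_gt (lt_of_lt_of_le h0 ht.1)
  have hIC : IntegrableOn f1 (Ioc η 1) := by
    rw [integrableOn_Ioc_iff_integrableOn_Ioo,
      integrableOn_congr_fun hC_eq measurableSet_Ioo]
    exact (hCcont.integrableOn_Icc).mono_set Ioo_subset_Icc_self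
  have h0uIcc : (0:ℝ) ∉ Set.uIcc η 1 := by
    rw [Set.uIcc_of_le h1.le]
    intro hc
    exact absurd hc.1 (not_le.mpr h0)
  have hIntC : ∫ t in Ioc η 1, f1 t = L / 4 := by
    rw [integral_Ioc_eq_integral_Ioo, setIntegral_congr_fun measurableSet_Ioo hC_eq,
      ← integral_Ioc_eq_integral_Ioo, ← intervalIntegral.integral_of_le h1.le,
      intervalIntegral.integral_const_mul, integral_one_div h0uIcc]
    rw [show (1:ℝ) / η = η⁻¹ by ring, Real.log_inv, hlogη]
    ring
  -- piece D : (1, 2]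
  have hD_eq : EqOn f1 (fun _ => (1:ℝ)) (Ioo (1:ℝ) 2) := by
    intro t ht
    simp [hf1, hderiv_aff t ht]
  have hID : IntegrableOn f1 (Ioc (1:ℝ) 2) := by
    rw [integrableOn_Ioc_iff_integrableOn_Ioo,
      integrableOn_congr_fun hD_eq measurableSet_Ioo]
    exact (integrableOn_const_iff (by simp)).mpr (Or.inr (by rw [Real.volume_Ioo]; exact ENNReal.ofReal_lt_top))
  have hIntD : ∫ t in Ioc (1:ℝ) 2, f1 t = 1 := by
    rw [integral_Ioc_eq_integral_Ioo, setIntegral_congr_fun measurableSet_Ioo hD_eq,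
      setIntegral_const, Real.volume_real_Ioo_of_le (by norm_num), smul_eq_mul]
    norm_num
  -- piece E : (2, ∞)
  have hE_eq : EqOn f1 (fun _ => (0:ℝ)) (Ioi (2:ℝ)) := by
    intro t ht
    simp [hf1, hderiv_zero_right t ht]
  have hIE : IntegrableOn f1 (Ioi (2:ℝ)) := by
    rw [integrableOn_congr_fun hE_eq measurableSet_Ioi]
    exact (integrableOn_const_iff (by simp)).mpr (Or.inl (by simp))
  have hIntE : ∫ t in Ioi (2:ℝ), f1 t = 0 := by
    rw [setIntegral_congr_fun measurableSet_Ioi hE_eq]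
    simp
  -- assemble
  have hI_Ioi1 : IntegrableOn f1 (Ioi (1:ℝ)) := by rw [← e1]; exact hID.union hIE
  have hI_Ioiη : IntegrableOn f1 (Ioi η) := by rw [← e2]; exact hIC.union hI_Ioi1
  have hI_Ioiη2 : IntegrableOn f1 (Ioi (η/2)) := by rw [← e3]; exact hIB.union hI_Ioiη
  have hInt1 : ∫ t in Ioi (0:ℝ), f1 t = 3 + L / 4 := by
    calc ∫ t in Ioi (0:ℝ), f1 t
        = (∫ t in Ioc 0 (η/2), f1 t) + ∫ t in Ioi (η/2), f1 t := by
          rw [← e4]; exact setIntegral_union (hdisj _ _) measurableSet_Ioi hIA hI_Ioiη2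
      _ = (∫ t in Ioc 0 (η/2), f1 t) + ((∫ t in Ioc (η/2) η, f1 t) + ∫ t in Ioi η, f1 t) := by
          rw [← e3, setIntegral_union (hdisj _ _) measurableSet_Ioi hIB hI_Ioiη]
      _ = (∫ t in Ioc 0 (η/2), f1 t) + ((∫ t in Ioc (η/2) η, f1 t) +
            ((∫ t in Ioc η 1, f1 t) + ∫ t in Ioi 1, f1 t)) := by
          rw [← e2, setIntegral_union (hdisj _ _) measurableSet_Ioi hIC hI_Ioi1]
      _ = (∫ t in Ioc 0 (η/2), f1 t) + ((∫ t in Ioc (η/2) η, f1 t) +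
            ((∫ t in Ioc η 1, f1 t) + ((∫ t in Ioc (1:ℝ) 2, f1 t) + ∫ t in Ioi (2:ℝ), f1 t))) := by
          rw [← e1, setIntegral_union (hdisj _ _) measurableSet_Ioi hID hIE]
      _ = 3 + L / 4 := by rw [hIntA, hIntB, hIntC, hIntD, hIntE]; ring
  -- the right-hand side
  set f2 : ℝ → ℝ := fun t => (1 + ε) * |v t| ^ 2 / (4 * t ^ 2) with hf2
  have hf2A : EqOn f2 (fun _ => (0:ℝ)) (Ioc 0 (η/2)) := by
    intro t ht
    have hv0 : v t = 0 := hv_eq_zero_left h0 h1 ht.2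
    simp [hf2, hv0]
  have hf2E : EqOn f2 (fun _ => (0:ℝ)) (Ioi (2:ℝ)) := by
    intro t ht
    have hv0 : v t = 0 := hv_eq_zero_right h0 h1 (le_of_lt ht)
    simp [hf2, hv0]
  have hf2mid : IntegrableOn f2 (Ioc (η/2) 2) := by
    have hcontOn : ContinuousOn f2 (Icc (η/2) 2) := by
      apply ContinuousOn.div
      · exact (continuous_const.mul ((hcont.abs).pow 2)).continuousOn
      · exact (continuous_const.mul (continuous_pow 2)).continuousOn
      · intro t ht
        have : 0 < t := lt_of_lt_of_le hη2 ht.1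
        positivity
    exact hcontOn.integrableOn_Icc.mono_set Ioc_subset_Icc_self
  have e5 : Ioc (η/2) 2 ∪ Ioi 2 = Ioi (η/2) := Ioc_union_Ioi_eq_Ioi (by linarith)
  have hIf2 : IntegrableOn f2 (Ioi (0:ℝ)) := by
    rw [← e4]
    apply IntegrableOn.union
    · rw [integrableOn_congr_fun hf2A measurableSet_Ioc]
      exact (integrableOn_const_iff (by simp)).mpr (Or.inl (by simp))
    · rw [← e5]
      apply hf2mid.union
      rw [integrableOn_congr_fun hf2E measurableSet_Ioi]
      exact (integrableOn_const_iff (by simp)).mpr (Or.inl (by simp))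
  have hf2nonneg : 0 ≤ᵐ[volume.restrict (Ioi (0:ℝ))] f2 := by
    apply Filter.Eventually.of_forall
    intro t
    have h1e : (0:ℝ) ≤ 1 + ε := by linarith
    simp only [hf2, Pi.zero_apply]
    positivity
  have hmono : (∫ t in Ioc η 1, f2 t) ≤ ∫ t in Ioi (0:ℝ), f2 t := by
    apply setIntegral_mono_set hIf2 hf2nonneg
    apply HasSubset.Subset.eventuallyLE
    intro t ht
    exact lt_trans h0 ht.1
  have hf2C : EqOn f2 (fun t => ((1 + ε)/4) * (1/t)) (Ioc η 1) := by
    intro t ht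
    have htpos : 0 < t := lt_trans h0 ht.1
    have hvt : v t = Real.sqrt t := hv_eq_sqrt h0 ht.1.le ht.2
    simp only [hf2, hvt, abs_of_nonneg (Real.sqrt_nonneg t), Real.sq_sqrt htpos.le]
    field_simp
  have hIntC2 : (∫ t in Ioc η 1, f2 t) = (1 + ε) * L / 4 := by
    rw [setIntegral_congr_fun measurableSet_Ioc hf2C,
      ← intervalIntegral.integral_of_le h1.le,
      intervalIntegral.integral_const_mul, integral_one_div h0uIcc]
    rw [show (1:ℝ) / η = η⁻¹ by ring, Real.log_inv, hlogη]
    ring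
  -- conclude
  refine ⟨v, hlip, hcompact, htsupp, hne, ?_⟩
  have hεL : ε * L = 12 + ε := by
    rw [hL]
    field_simp
  have hexp : (1 + ε) * L = L + (12 + ε) := by
    rw [add_mul, one_mul, hεL]
  have hfinal : 3 + L / 4 < (1 + ε) * L / 4 := by
    rw [hexp]
    linarith
  calc (∫ t in Ioi (0:ℝ), (deriv v t)^2) = 3 + L / 4 := hInt1
    _ < (1 + ε) * L / 4 := hfinal
    _ = ∫ t in Ioc η 1, f2 t := hIntC2.symm
    _ ≤ ∫ t in Ioi (0:ℝ), f2 t := hmono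
end

section
/- Let ρ ∈ ℝ, R ≥ 1 and ε > 0. Then there exists an infinite sequence {u_k} of functions in H¹_0((R,∞), r^ρ dr), pairwise orthonormal in L²((R,∞), r^ρ dr), such that for every k: ∫_R^∞ ((ρ-1)²/(4r²) + (1+ε)/(4r²(ln r)²)) |u_k(r)|² r^ρ dr > ∫_R^∞ |u_k'(r)|² r^ρ dr. -/
open MeasureTheory Set Real Filter Asymptotics

noncomputable section

namespace RevHardy

/-- squared positive part -/
def g2 (y : ℝ) : ℝ := (max 0 y)^2

lemma g2_of_nonpos {y : ℝ} (h : y ≤ 0) : g2 y = 0 := by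
  simp [g2, max_eq_left h]

lemma hasDerivAt_g2 (y : ℝ) : HasDerivAt g2 (2 * max 0 y) y := by
  rcases lt_trichotomy y 0 with h | h | h
  · have hev : (fun _ : ℝ => (0:ℝ)) =ᶠ[nhds y] g2 := by
      filter_upwards [Iio_mem_nhds h] with z hz
      simp [g2_of_nonpos (le_of_lt hz)]
    have := (hasDerivAt_const y (0:ℝ)).congr_of_eventuallyEq hev.symm
    simpa [max_eq_left h.le] using this
  · subst h
    rw [hasDerivAt_iff_isLittleO]
    have hO : (fun x : ℝ => g2 x - g2 0 - (x - 0) • (2 * max 0 0)) =O[nhds 0] fun x => x^2 := by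
      apply IsBigO.of_bound 1
      filter_upwards with z
      have h1 : 0 ≤ g2 z := sq_nonneg _
      have h2 : g2 z ≤ z^2 := by
        rcases le_or_gt z 0 with hz | hz
        · rw [g2_of_nonpos hz]; positivity
        · simp [g2, max_eq_right hz.le]
      have h3 : g2 0 = 0 := by simp [g2]
      simp only [h3, sub_zero, max_self, mul_zero, smul_zero, norm_eq_abs, one_mul, sq_abs]
      rw [abs_of_nonneg h1]
      calc g2 z ≤ z^2 := h2
        _ ≤ |z^2| := le_abs_self _
    have ho : (fun x : ℝ => x^2) =o[nhds 0] fun x => x := isLittleO_pow_id one_lt_two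
    simpa using hO.trans_isLittleO ho
  · have hev : (fun z : ℝ => z^2) =ᶠ[nhds y] g2 := by
      filter_upwards [Ioi_mem_nhds h] with z hz
      simp [g2, max_eq_right (le_of_lt (mem_Ioi.mp hz))]
    have := ((hasDerivAt_pow 2 y)).congr_of_eventuallyEq hev.symm
    simpa [max_eq_right h.le, pow_one] using this

lemma continuous_g2 : Continuous g2 := by
  unfold g2; fun_prop


/-- plateau bump: square of positive part of a downward parabola -/
def Q (m M s : ℝ) : ℝ := max 0 (1 - ((s - m)/M)^2)

def Z (m M s : ℝ) : ℝ := g2 (1 - ((s - m)/M)^2)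

def Z' (m M s : ℝ) : ℝ := 2 * Q m M s * (-(2*(s - m)/M^2))

lemma Z_eq_sq (m M s : ℝ) : Z m M s = (Q m M s)^2 := rfl

lemma Q_nonneg (m M s : ℝ) : 0 ≤ Q m M s := le_max_left _ _

lemma Z_nonneg (m M s : ℝ) : 0 ≤ Z m M s := sq_nonneg _

lemma Q_le_one (m M s : ℝ) : Q m M s ≤ 1 := by
  apply max_le (by norm_num)
  nlinarith [sq_nonneg ((s - m)/M)]

lemma hasDerivAt_Z {M : ℝ} (hM : M ≠ 0) (m s : ℝ) :
    HasDerivAt (Z m M) (Z' m M s) s := by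
  have h0 : HasDerivAt (fun s : ℝ => (s - m)/M) (1/M) s := by
    simpa using ((hasDerivAt_id s).sub_const m).div_const M
  have h1 : HasDerivAt (fun s : ℝ => 1 - ((s - m)/M)^2) (-(2*(s-m)/M^2)) s := by
    have := (h0.fun_pow 2).const_sub 1
    refine this.congr_deriv ?_
    push_cast
    rw [pow_one]
    ring
  have := (hasDerivAt_g2 (1 - ((s - m)/M)^2)).comp s h1
  exact this

lemma Q_eq_zero {m M s : ℝ} (hM : 0 < M) (h : M^2 ≤ (s - m)^2) : Q m M s = 0 := by
  apply max_eq_left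
  have h2 : (1:ℝ) ≤ ((s - m)/M)^2 := by
    rw [div_pow, le_div_iff₀ (by positivity)]
    linarith
  linarith

lemma Z_eq_zero {m M s : ℝ} (hM : 0 < M) (h : M^2 ≤ (s - m)^2) : Z m M s = 0 := by
  rw [Z_eq_sq, Q_eq_zero hM h]; norm_num

lemma Z'_eq_zero {m M s : ℝ} (hM : 0 < M) (h : M^2 ≤ (s - m)^2) : Z' m M s = 0 := by
  rw [Z', Q_eq_zero hM h]; ring

lemma Z_ne_zero_abs {m M s : ℝ} (hM : 0 < M) (h : Z m M s ≠ 0) : |s - m| < M := by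
  by_contra hc
  push_neg at hc
  exact h (Z_eq_zero hM (by nlinarith [abs_nonneg (s-m), sq_abs (s-m)]))

lemma continuous_Q (m M : ℝ) : Continuous (Q m M) := by
  unfold Q; fun_prop

lemma continuous_Z (m M : ℝ) : Continuous (Z m M) := by
  unfold Z g2; fun_prop

lemma continuous_Z' (m M : ℝ) : Continuous (Z' m M) := by
  unfold Z' Q; fun_prop


/-! ### The substitution map and the test functions -/

def φ (s : ℝ) : ℝ := exp (exp s)

lemma one_lt_φ (s : ℝ) : 1 < φ s := by
  have : exp 0 < exp (exp s) := exp_lt_exp.mpr (exp_pos s)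
  simpa [φ, exp_zero] using this

lemma φ_pos (s : ℝ) : 0 < φ s := lt_trans one_pos (one_lt_φ s)

lemma φ_lt_φ {s t : ℝ} (h : s < t) : φ s < φ t :=
  exp_lt_exp.mpr (exp_lt_exp.mpr h)

lemma φ_le_φ {s t : ℝ} (h : s ≤ t) : φ s ≤ φ t :=
  exp_le_exp.mpr (exp_le_exp.mpr h)

lemma hasDerivAt_φ (s : ℝ) : HasDerivAt φ (exp (exp s) * exp s) s :=
  (Real.hasDerivAt_exp (exp s)).comp s (Real.hasDerivAt_exp s)

lemma log_φ (s : ℝ) : Real.log (φ s) = exp s := log_exp _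

lemma ll_φ (s : ℝ) : Real.log (Real.log (φ s)) = s := by rw [log_φ, log_exp]

lemma ll_le_of_le {t r : ℝ} (hr : 1 < r) (h : r ≤ φ t) : Real.log (Real.log r) ≤ t := by
  have h1 : Real.log r ≤ exp t := by
    rw [← log_φ t]
    exact Real.log_le_log (by linarith) h
  have h2 : Real.log (Real.log r) ≤ Real.log (exp t) :=
    Real.log_le_log (Real.log_pos hr) h1
  rwa [log_exp] at h2

lemma le_ll_of_ge {t r : ℝ} (h : φ t ≤ r) : t ≤ Real.log (Real.log r) := by
  have h0 : (0:ℝ) < exp t := exp_pos t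
  have h1 : exp t ≤ Real.log r := by
    rw [← log_φ t]
    exact Real.log_le_log (φ_pos t) h
  have h2 : Real.log (exp t) ≤ Real.log (Real.log r) :=
    Real.log_le_log h0 h1
  rwa [log_exp] at h2

lemma lt_φ_of_ll_lt {t r : ℝ} (hr0 : 0 < r) (hr : 0 < Real.log r)
    (h : Real.log (Real.log r) < t) : r < φ t := by
  have h1 : Real.log r < exp t := by
    calc Real.log r = exp (Real.log (Real.log r)) := (exp_log hr).symm
    _ < exp t := exp_lt_exp.mpr h
  calc r = exp (Real.log r) := (exp_log hr0).symm
  _ < φ t := exp_lt_exp.mpr h1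

/-- the test function before normalization -/
def V (A m M : ℝ) (r : ℝ) : ℝ :=
  if r ≤ 2 then 0
  else r ^ A * Real.sqrt (Real.log r) * Z m M (Real.log (Real.log r))

/-- its derivative (valid for `1 < r`) -/
def E (A m M : ℝ) (r : ℝ) : ℝ :=
  (A * r ^ (A - 1) * Real.sqrt (Real.log r)
      + r ^ A * (1 / (2 * Real.sqrt (Real.log r)) * r⁻¹)) * Z m M (Real.log (Real.log r))
  + r ^ A * Real.sqrt (Real.log r)
      * (Z' m M (Real.log (Real.log r)) * ((Real.log r)⁻¹ * r⁻¹))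

section Vlemmas

variable {A m M : ℝ} (hM : 0 < M) (hm : 1 ≤ m - M)

include hM in
lemma sq_ge_of_le {s : ℝ} (h : s ≤ m - M) : M^2 ≤ (s - m)^2 := by nlinarith [hM.le]
include hM in
lemma sq_ge_of_ge {s : ℝ} (h : m + M ≤ s) : M^2 ≤ (s - m)^2 := by nlinarith [hM.le]

include hM hm in
lemma V_eq_formula {r : ℝ} (hr : 1 < r) :
    V A m M r = r ^ A * Real.sqrt (Real.log r) * Z m M (Real.log (Real.log r)) := by
  unfold V
  split_ifs with h
  · have hlr : Real.log r ≤ 1 := by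
      rw [Real.log_le_iff_le_exp (by linarith)]
      calc r ≤ 2 := h
      _ ≤ exp 1 := by nlinarith [Real.exp_one_gt_d9]
    have hll : Real.log (Real.log r) ≤ 0 :=
      Real.log_nonpos (Real.log_pos hr).le hlr
    rw [Z_eq_zero hM (sq_ge_of_le hM (by linarith)), mul_zero]
  · rfl

include hM in
lemma hasDerivAt_V_formula {r : ℝ} (hr : 1 < r) :
    HasDerivAt (fun r => r ^ A * Real.sqrt (Real.log r) * Z m M (Real.log (Real.log r)))
      (E A m M r) r := by
  have hrpos : (0:ℝ) < r := by linarith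
  have hrne : r ≠ 0 := ne_of_gt hrpos
  have hlogpos : 0 < Real.log r := Real.log_pos hr
  have hlogne : Real.log r ≠ 0 := ne_of_gt hlogpos
  have h1 : HasDerivAt (fun r : ℝ => r ^ A) (A * r ^ (A - 1)) r :=
    Real.hasDerivAt_rpow_const (Or.inl hrne)
  have h2 : HasDerivAt (fun r : ℝ => Real.sqrt (Real.log r))
      (1 / (2 * Real.sqrt (Real.log r)) * r⁻¹) r :=
    (Real.hasDerivAt_sqrt hlogne).comp r (Real.hasDerivAt_log hrne)
  have h3 : HasDerivAt (fun r : ℝ => Z m M (Real.log (Real.log r)))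
      (Z' m M (Real.log (Real.log r)) * ((Real.log r)⁻¹ * r⁻¹)) r :=
    (hasDerivAt_Z hM.ne' m _).comp r
      ((Real.hasDerivAt_log hlogne).comp r (Real.hasDerivAt_log hrne))
  exact (h1.mul h2).mul h3

include hM hm in
lemma hasDerivAt_V {r : ℝ} (hr : 1 < r) : HasDerivAt (V A m M) (E A m M r) r := by
  apply (hasDerivAt_V_formula hM hr).congr_of_eventuallyEq
  filter_upwards [Ioi_mem_nhds hr] with z hz
  exact V_eq_formula hM hm hz

lemma hasDerivAt_V_zero {r : ℝ} (hr : r < 2) : HasDerivAt (V A m M) 0 r := by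
  apply (hasDerivAt_const r (0:ℝ)).congr_of_eventuallyEq
  filter_upwards [Iio_mem_nhds hr] with z hz
  simp only [V, if_pos (le_of_lt (show z < 2 from hz))]

include hM hm in
lemma differentiable_V : Differentiable ℝ (V A m M) := by
  intro r
  rcases lt_or_ge r 2 with h | h
  · exact (hasDerivAt_V_zero h).differentiableAt
  · exact (hasDerivAt_V hM hm (by linarith)).differentiableAt

include hM hm in
lemma deriv_V_eq {r : ℝ} (hr : 1 < r) : deriv (V A m M) r = E A m M r :=
  (hasDerivAt_V hM hm hr).deriv

lemma deriv_V_zero {r : ℝ} (hr : r < 2) : deriv (V A m M) r = 0 :=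
  (hasDerivAt_V_zero hr).deriv

include hM in
lemma E_eq_zero {r : ℝ} (hr : 1 < r) (h : r ≤ φ (m - M) ∨ φ (m + M) ≤ r) :
    E A m M r = 0 := by
  have hsq : M^2 ≤ (Real.log (Real.log r) - m)^2 := by
    rcases h with h | h
    · exact sq_ge_of_le hM (ll_le_of_le hr h)
    · exact sq_ge_of_ge hM (le_ll_of_ge h)
  rw [E, Z_eq_zero hM hsq, Z'_eq_zero hM hsq]
  ring

include hM hm in
lemma V_eq_zero {r : ℝ} (h : r ≤ φ (m - M) ∨ φ (m + M) ≤ r) : V A m M r = 0 := by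
  rcases le_or_gt r 2 with h2 | h2
  · simp [V, if_pos h2]
  · have hr : 1 < r := by linarith
    have hsq : M^2 ≤ (Real.log (Real.log r) - m)^2 := by
      rcases h with h | h
      · exact sq_ge_of_le hM (ll_le_of_le hr h)
      · exact sq_ge_of_ge hM (le_ll_of_ge h)
    rw [V_eq_formula hM hm hr, Z_eq_zero hM hsq, mul_zero]

include hM in
lemma support_V_subset : Function.support (V A m M) ⊆ Icc (φ (m - M)) (φ (m + M)) := by
  intro r hr
  simp only [Function.mem_support] at hr
  have h2 : ¬ (r ≤ 2) := by
    intro h; exact hr (by simp [V, if_pos h])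
  push_neg at h2
  have hZ : Z m M (Real.log (Real.log r)) ≠ 0 := by
    intro h; exact hr (by simp [V, if_neg (not_le.mpr (by linarith : (2:ℝ) < r)), h])
  have habs := Z_ne_zero_abs hM hZ
  rw [abs_lt] at habs
  have hlogpos : 0 < Real.log r := Real.log_pos (by linarith)
  constructor
  · exact le_of_lt ((by
      have h1 : exp (m - M) < Real.log r := by
        calc exp (m - M) < exp (Real.log (Real.log r)) := exp_lt_exp.mpr (by linarith)
        _ = Real.log r := exp_log hlogpos
      calc φ (m - M) = exp (exp (m - M)) := rfl
      _ < exp (Real.log r) := exp_lt_exp.mpr h1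
      _ = r := exp_log (by linarith) : φ (m - M) < r))
  · exact le_of_lt (lt_φ_of_ll_lt (by linarith) hlogpos (by linarith))

lemma continuousAt_E {r : ℝ} (hr : 1 < r) : ContinuousAt (E A m M) r := by
  have hrne : r ≠ 0 := by intro h; rw [h] at hr; norm_num at hr
  have hlogpos : 0 < Real.log r := Real.log_pos hr
  have hlogne : Real.log r ≠ 0 := ne_of_gt hlogpos
  have clog : ContinuousAt Real.log r := Real.continuousAt_log hrne
  have csqrt : ContinuousAt (fun r : ℝ => Real.sqrt (Real.log r)) r :=
    Real.continuous_sqrt.continuousAt.comp clog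
  have cll : ContinuousAt (fun r : ℝ => Real.log (Real.log r)) r :=
    (Real.continuousAt_log hlogne).comp clog
  have cZ : ContinuousAt (fun r : ℝ => Z m M (Real.log (Real.log r))) r :=
    (continuous_Z m M).continuousAt.comp cll
  have cZ' : ContinuousAt (fun r : ℝ => Z' m M (Real.log (Real.log r))) r :=
    (continuous_Z' m M).continuousAt.comp cll
  have c1 : ContinuousAt (fun r : ℝ => r ^ A) r :=
    Real.continuousAt_rpow_const r A (Or.inl hrne)
  have c2 : ContinuousAt (fun r : ℝ => r ^ (A - 1)) r :=
    Real.continuousAt_rpow_const r (A - 1) (Or.inl hrne)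
  have cinv : ContinuousAt (fun r : ℝ => r⁻¹) r := continuousAt_inv₀ hrne
  have cloginv : ContinuousAt (fun r : ℝ => (Real.log r)⁻¹) r := clog.inv₀ hlogne
  have cden : ContinuousAt (fun r : ℝ => 1 / (2 * Real.sqrt (Real.log r))) r := by
    apply continuousAt_const.div (continuousAt_const.mul csqrt)
    have : 0 < Real.sqrt (Real.log r) := Real.sqrt_pos.mpr hlogpos
    exact (mul_pos two_pos this).ne'
  exact (((continuousAt_const.mul c2).mul csqrt).add
      (c1.mul (cden.mul cinv))).mul cZ |>.add ((c1.mul csqrt).mul (cZ'.mul (cloginv.mul cinv)))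

include hM hm in
lemma continuous_derivV : Continuous (deriv (V A m M)) := by
  rw [continuous_iff_continuousAt]
  intro r
  rcases lt_or_ge r 2 with h | h
  · have hev : deriv (V A m M) =ᶠ[nhds r] (fun _ => (0:ℝ)) := by
      filter_upwards [Iio_mem_nhds h] with z hz
      exact deriv_V_zero hz
    exact continuousAt_const.congr hev.symm
  · have h1 : (1:ℝ) < r := by linarith
    have hev : deriv (V A m M) =ᶠ[nhds r] E A m M := by
      filter_upwards [Ioi_mem_nhds h1] with z hz
      exact deriv_V_eq hM hm hz
    exact ContinuousAt.congr (continuousAt_E h1) hev.symm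

end Vlemmas


/-! ### Pointwise identities under the substitution `r = φ s` -/

section Ident

variable {A m M ρ ε : ℝ}

lemma rpow_φ (s y : ℝ) : (φ s) ^ y = exp (exp s * y) := by
  rw [Real.rpow_def_of_pos (φ_pos s), log_φ]

lemma rpow_φ_sub_one (s : ℝ) : (φ s) ^ (A - 1) = exp (exp s * A) / exp (exp s) := by
  rw [rpow_φ, show exp s * (A - 1) = exp s * A - exp s by ring, Real.exp_sub]

lemma rpow_φ_rho (hA : A = (1 - ρ)/2) (s : ℝ) :
    (φ s) ^ ρ = exp (exp s) / exp (exp s * A) ^ 2 := by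
  rw [rpow_φ, show exp s * ρ = exp s - (exp s * A + exp s * A) by rw [hA]; ring,
    Real.exp_sub, Real.exp_add, ← sq]

lemma identA (hA : A = (1 - ρ)/2) (s : ℝ) :
    (exp (exp s) * exp s) * (|E A m M (φ s)|^2 * (φ s) ^ ρ)
      = (A * exp s * Z m M s + Z m M s / 2 + Z' m M s)^2 := by
  rw [sq_abs, rpow_φ_rho hA]
  unfold E
  rw [rpow_φ_sub_one, ll_φ, rpow_φ, log_φ]
  simp only [φ]
  set S := Real.sqrt (exp s) with hS
  set X := exp s with hXd
  set EA := exp (X * A) with hEA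
  set EX := exp X with hEX
  have hσ2 : S^2 = X := by rw [hS, hXd]; exact Real.sq_sqrt (exp_pos s).le
  have hXpos : 0 < X := by rw [hXd]; exact exp_pos s
  have hSpos : 0 < S := by rw [hS]; exact Real.sqrt_pos.mpr hXpos
  have hEApos : 0 < EA := by rw [hEA]; exact exp_pos _
  have hEXpos : 0 < EX := by rw [hEX]; exact exp_pos _
  rw [← hσ2]
  field_simp

lemma identB (hM : 0 < M) (hm : 1 ≤ m - M) (hA : A = (1 - ρ)/2) (s : ℝ) :
    (exp (exp s) * exp s) *
      ((((ρ - 1)^2 / (4 * (φ s)^2) + (1 + ε) / (4 * (φ s)^2 * (Real.log (φ s))^2))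
          * |V A m M (φ s)|^2 * (φ s) ^ ρ))
      = (A^2 * (exp s)^2 + (1 + ε)/4) * (Z m M s)^2 := by
  rw [sq_abs, rpow_φ_rho hA, V_eq_formula hM hm (one_lt_φ s), ll_φ, rpow_φ, log_φ]
  simp only [φ]
  set S := Real.sqrt (exp s) with hS
  set X := exp s with hXd
  set EA := exp (X * A) with hEA
  set EX := exp X with hEX
  have hσ2 : S^2 = X := by rw [hS, hXd]; exact Real.sq_sqrt (exp_pos s).le
  have hXpos : 0 < X := by rw [hXd]; exact exp_pos s
  have hSpos : 0 < S := by rw [hS]; exact Real.sqrt_pos.mpr hXpos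
  have hEApos : 0 < EA := by rw [hEA]; exact exp_pos _
  have hEXpos : 0 < EX := by rw [hEX]; exact exp_pos _
  have hAρ : A^2 = (ρ - 1)^2/4 := by rw [hA]; ring
  rw [hAρ, ← hσ2]
  field_simp

lemma identN (hM : 0 < M) (hm : 1 ≤ m - M) (hA : A = (1 - ρ)/2) (s : ℝ) :
    (exp (exp s) * exp s) * ((V A m M (φ s)) * (V A m M (φ s)) * (φ s) ^ ρ)
      = exp (exp s) ^ 2 * (exp s) ^ 2 * (Z m M s)^2 := by
  rw [rpow_φ_rho hA, V_eq_formula hM hm (one_lt_φ s), ll_φ, rpow_φ, log_φ]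
  set S := Real.sqrt (exp s) with hS
  set X := exp s with hXd
  set EA := exp (X * A) with hEA
  set EX := exp X with hEX
  have hσ2 : S^2 = X := by rw [hS, hXd]; exact Real.sq_sqrt (exp_pos s).le
  have hXpos : 0 < X := by rw [hXd]; exact exp_pos s
  have hSpos : 0 < S := by rw [hS]; exact Real.sqrt_pos.mpr hXpos
  have hEApos : 0 < EA := by rw [hEA]; exact exp_pos _
  have hEXpos : 0 < EX := by rw [hEX]; exact exp_pos _
  rw [← hσ2]
  field_simp

end Ident


/-! ### FTC and numeric bounds on the `s`-side integrals -/

section Sside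

open intervalIntegral

variable {A m M ε : ℝ}

def Dfun (A m M : ℝ) (s : ℝ) : ℝ := A * exp s * (Z m M s)^2 + (Z m M s)^2/2

def Dfun' (A m M : ℝ) (s : ℝ) : ℝ :=
  A * exp s * (Z m M s)^2 + A * exp s * (2 * Z m M s * Z' m M s)
    + Z m M s * Z' m M s

lemma hasDerivAt_Dfun (hM : M ≠ 0) (s : ℝ) :
    HasDerivAt (Dfun A m M) (Dfun' A m M s) s := by
  have hZ2 : HasDerivAt (fun s => (Z m M s)^2) (2 * Z m M s * Z' m M s) s := by
    simpa using (hasDerivAt_Z hM m s).fun_pow 2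
  have h1 : HasDerivAt (fun s : ℝ => A * exp s) (A * exp s) s :=
    (Real.hasDerivAt_exp s).const_mul A
  have := (h1.fun_mul hZ2).add (hZ2.div_const 2)
  refine this.congr_deriv ?_
  unfold Dfun'
  ring

lemma continuous_Dfun' : Continuous (Dfun' A m M) := by
  unfold Dfun'
  exact (((continuous_const.mul continuous_exp).mul ((continuous_Z m M).pow 2)).add
    ((continuous_const.mul continuous_exp).mul
      ((continuous_const.mul (continuous_Z m M)).mul (continuous_Z' m M)))).add
    ((continuous_Z m M).mul (continuous_Z' m M))

lemma Z_at_left (hM : 0 < M) : Z m M (m - M) = 0 :=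
  Z_eq_zero hM (le_of_eq (by ring))

lemma Z_at_right (hM : 0 < M) : Z m M (m + M) = 0 :=
  Z_eq_zero hM (le_of_eq (by ring))

lemma integral_Dfun' (hM : 0 < M) :
    ∫ s in (m - M)..(m + M), Dfun' A m M s = 0 := by
  rw [intervalIntegral.integral_eq_sub_of_hasDerivAt
    (fun s _ => hasDerivAt_Dfun hM.ne' s)
    (continuous_Dfun'.intervalIntegrable _ _)]
  simp [Dfun, Z_at_left hM, Z_at_right hM]

lemma intZ'sq_le (hM : 0 < M) :
    ∫ s in (m - M)..(m + M), (Z' m M s)^2 ≤ 32/M := by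
  have hab : m - M ≤ m + M := by linarith
  have hle : ∀ s ∈ Icc (m - M) (m + M), (Z' m M s)^2 ≤ 16/M^2 := by
    intro s hs
    have h1 : (s - m)^2 ≤ M^2 := by
      rcases hs with ⟨h2, h3⟩
      nlinarith
    have h2 : Z' m M s ^ 2 = 16 * (Q m M s)^2 * (s - m)^2 / M^4 := by
      unfold Z'; ring
    rw [h2, div_le_div_iff₀ (by positivity) (by positivity)]
    have hQ2 : (Q m M s)^2 ≤ 1 := by nlinarith [Q_le_one m M s, Q_nonneg m M s]
    have hprod : (Q m M s)^2 * (s - m)^2 ≤ 1 * M^2 :=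
      mul_le_mul hQ2 h1 (sq_nonneg _) (by norm_num)
    nlinarith [hprod, sq_nonneg M, hM]
  calc ∫ s in (m - M)..(m + M), (Z' m M s)^2
      ≤ ∫ _ in (m - M)..(m + M), 16/M^2 := by
        apply intervalIntegral.integral_mono_on hab
          (((continuous_Z' m M).pow 2).intervalIntegrable _ _)
          (intervalIntegrable_const) hle
    _ = (2*M) * (16/M^2) := by
        rw [intervalIntegral.integral_const, smul_eq_mul]
        ring_nf
    _ = 32/M := by field_simp; ring

lemma intZsq_ge (hM : 0 < M) :
    M/4 ≤ ∫ s in (m - M)..(m + M), (Z m M s)^2 := by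
  have hint : ∀ c d : ℝ, IntervalIntegrable (fun s => (Z m M s)^2) volume c d :=
    fun c d => ((continuous_Z m M).pow 2).intervalIntegrable c d
  have hsplit : ∫ s in (m - M)..(m + M), (Z m M s)^2
      = (∫ s in (m - M)..(m - M/2), (Z m M s)^2)
        + ((∫ s in (m - M/2)..(m + M/2), (Z m M s)^2)
        + ∫ s in (m + M/2)..(m + M), (Z m M s)^2) := by
    rw [intervalIntegral.integral_add_adjacent_intervals (hint _ _) (hint _ _),
      intervalIntegral.integral_add_adjacent_intervals (hint _ _) (hint _ _)]
  have hmid : M/4 ≤ ∫ s in (m - M/2)..(m + M/2), (Z m M s)^2 := by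
    have hab : m - M/2 ≤ m + M/2 := by linarith
    have hle : ∀ s ∈ Icc (m - M/2) (m + M/2), (1:ℝ)/4 ≤ (Z m M s)^2 := by
      intro s hs
      rcases hs with ⟨h2, h3⟩
      have h1 : ((s - m)/M)^2 ≤ 1/4 := by
        rw [div_pow, div_le_div_iff₀ (by positivity) (by norm_num)]
        nlinarith
      have hQ : 3/4 ≤ Q m M s := by
        calc (3:ℝ)/4 ≤ 1 - ((s - m)/M)^2 := by linarith
        _ ≤ Q m M s := le_max_right _ _
      rw [Z_eq_sq]
      have h4 : (9/16:ℝ) ≤ (Q m M s)^2 := by nlinarith [Q_nonneg m M s]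
      nlinarith [h4]
    calc M/4 = (M) * (1/4 : ℝ) := by ring
      _ = ∫ _ in (m - M/2)..(m + M/2), (1:ℝ)/4 := by
          rw [intervalIntegral.integral_const, smul_eq_mul]
          ring_nf
      _ ≤ ∫ s in (m - M/2)..(m + M/2), (Z m M s)^2 :=
          intervalIntegral.integral_mono_on hab intervalIntegrable_const (hint _ _) hle
  have ho1 : 0 ≤ ∫ s in (m - M)..(m - M/2), (Z m M s)^2 :=
    intervalIntegral.integral_nonneg (by linarith) (fun s _ => sq_nonneg _)
  have ho2 : 0 ≤ ∫ s in (m + M/2)..(m + M), (Z m M s)^2 :=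
    intervalIntegral.integral_nonneg (by linarith) (fun s _ => sq_nonneg _)
  rw [hsplit]
  linarith

lemma sside_lt (hε : 0 < ε) (hM : 512 < ε * M^2) (hMpos : 0 < M) :
    ∫ s in (m - M)..(m + M), (Z' m M s)^2
      < ε/4 * ∫ s in (m - M)..(m + M), (Z m M s)^2 := by
  have h1 := intZ'sq_le (m := m) hMpos
  have h2 := intZsq_ge (m := m) hMpos
  have h3 : 32/M < ε/4 * (M/4) := by
    rw [div_lt_iff₀ hMpos]
    nlinarith
  have h4 : ε/4 * (M/4) ≤ ε/4 * ∫ s in (m - M)..(m + M), (Z m M s)^2 := by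
    apply mul_le_mul_of_nonneg_left h2 (by positivity)
  linarith

end Sside


/-! ### Master change of variables -/

lemma key_change (R a b : ℝ) (hab : a ≤ b) (hφa : R < φ a) (G : ℝ → ℝ)
    (hG : ContinuousOn G (Ioi 1))
    (hzero : ∀ r, R < r → r ∉ Ioc (φ a) (φ b) → G r = 0) :
    ∫ r in Ioi R, G r = ∫ s in a..b, (exp (exp s) * exp s) * G (φ s) := by
  have h1 : ∫ r in Ioi R, G r = ∫ r in Ioi R, (Ioc (φ a) (φ b)).indicator G r := by
    apply setIntegral_congr_fun measurableSet_Ioi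
    intro r hr
    by_cases h : r ∈ Ioc (φ a) (φ b)
    · rw [indicator_of_mem h]
    · rw [indicator_of_notMem h, hzero r hr h]
  have h2 : ∫ r in Ioi R, (Ioc (φ a) (φ b)).indicator G r = ∫ r in Ioc (φ a) (φ b), G r := by
    rw [setIntegral_indicator measurableSet_Ioc, inter_eq_self_of_subset_right]
    intro x hx
    exact lt_trans hφa hx.1
  have h3 : ∫ r in Ioc (φ a) (φ b), G r = ∫ r in (φ a)..(φ b), G r :=
    (intervalIntegral.integral_of_le (φ_le_φ hab)).symm
  have h4 : ∫ s in a..b, (exp (exp s) * exp s) • (G ∘ φ) s = ∫ r in (φ a)..(φ b), G r := by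
    apply intervalIntegral.integral_comp_smul_deriv' (fun x _ => hasDerivAt_φ x)
      (((continuous_exp.comp continuous_exp).mul continuous_exp).continuousOn)
    apply hG.mono
    rintro r ⟨x, _, rfl⟩
    exact one_lt_φ x
  rw [h1, h2, h3, ← h4]
  simp only [Function.comp, smul_eq_mul]

/-! ### The three integral identities -/

section Main

variable {A m M ρ ε R : ℝ}
variable (hM : 0 < M) (hm : 1 ≤ m - M) (hA : A = (1 - ρ)/2) (hφa : R < φ (m - M))

include hM hm hA hφa in
lemma IA_eq :
    ∫ r in Ioi R, |deriv (V A m M) r|^2 * r ^ ρ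
      = ∫ s in (m - M)..(m + M),
          (A * exp s * Z m M s + Z m M s / 2 + Z' m M s)^2 := by
  rw [key_change R (m - M) (m + M) (by linarith) hφa]
  · apply intervalIntegral.integral_congr
    intro s _
    beta_reduce
    rw [deriv_V_eq hM hm (one_lt_φ s)]
    exact identA hA s
  · -- continuity
    intro r hr
    have h1 : (1:ℝ) < r := hr
    apply ContinuousWithinAt.mul
    · exact (((continuous_derivV hM hm).abs.pow 2).continuousAt).continuousWithinAt
    · exact (Real.continuousAt_rpow_const r ρ (Or.inl (ne_of_gt (lt_trans one_pos h1)))).continuousWithinAt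
  · -- vanishing
    intro r hRr hnot
    have hd : deriv (V A m M) r = 0 := by
      rcases not_and_or.mp hnot with h | h
      · push_neg at h
        rcases lt_or_ge r 2 with h2 | h2
        · exact deriv_V_zero h2
        · rw [deriv_V_eq hM hm (by linarith)]
          exact E_eq_zero hM (by linarith) (Or.inl h)
      · push_neg at h
        rw [deriv_V_eq hM hm (lt_trans (one_lt_φ _) h)]
        exact E_eq_zero hM (lt_trans (one_lt_φ _) h) (Or.inr h.le)
    rw [hd]
    simp

include hM hm hA hφa in
lemma IB_eq :
    ∫ r in Ioi R,
        ((ρ - 1)^2 / (4 * r^2) + (1 + ε) / (4 * r^2 * (Real.log r)^2))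
          * |V A m M r|^2 * r ^ ρ
      = ∫ s in (m - M)..(m + M), (A^2 * (exp s)^2 + (1 + ε)/4) * (Z m M s)^2 := by
  rw [key_change R (m - M) (m + M) (by linarith) hφa]
  · apply intervalIntegral.integral_congr
    intro s _
    beta_reduce
    exact identB hM hm hA s
  · intro r hr
    have h1 : (1:ℝ) < r := hr
    have hrne : r ≠ 0 := ne_of_gt (lt_trans one_pos h1)
    have hlogne : Real.log r ≠ 0 := ne_of_gt (Real.log_pos h1)
    have hrpos : (0:ℝ) < r := lt_trans one_pos h1
    have hlpos : 0 < Real.log r := Real.log_pos h1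
    apply ContinuousWithinAt.mul
    apply ContinuousWithinAt.mul
    · apply ContinuousWithinAt.add
      · apply ContinuousWithinAt.div continuousWithinAt_const
        · exact (continuousAt_const.mul ((continuousAt_id.pow 2))).continuousWithinAt
        · positivity
      · apply ContinuousWithinAt.div continuousWithinAt_const
        · exact ((continuousAt_const.mul (continuousAt_id.pow 2)).mul
            (((Real.continuousAt_log hrne).pow 2))).continuousWithinAt
        · positivity
    · exact (((differentiable_V hM hm).continuous.abs.pow 2).continuousAt).continuousWithinAt
    · exact (Real.continuousAt_rpow_const r ρ (Or.inl hrne)).continuousWithinAt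
  · intro r hRr hnot
    have hV : V A m M r = 0 := by
      rcases not_and_or.mp hnot with h | h
      · push_neg at h
        exact V_eq_zero hM hm (Or.inl h)
      · push_neg at h
        exact V_eq_zero hM hm (Or.inr h.le)
    rw [hV]
    simp

include hM hm hA hφa in
lemma IN_eq :
    ∫ r in Ioi R, V A m M r * V A m M r * r ^ ρ
      = ∫ s in (m - M)..(m + M), exp (exp s) ^ 2 * (exp s) ^ 2 * (Z m M s)^2 := by
  rw [key_change R (m - M) (m + M) (by linarith) hφa]
  · apply intervalIntegral.integral_congr
    intro s _
    beta_reduce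
    exact identN hM hm hA s
  · intro r hr
    have h1 : (1:ℝ) < r := hr
    have hrne : r ≠ 0 := ne_of_gt (lt_trans one_pos h1)
    have hc := (differentiable_V hM hm (A := A)).continuous.continuousAt (x := r)
    exact ((hc.mul hc).mul
      (Real.continuousAt_rpow_const r ρ (Or.inl hrne))).continuousWithinAt
  · intro r hRr hnot
    have hV : V A m M r = 0 := by
      rcases not_and_or.mp hnot with h | h
      · push_neg at h
        exact V_eq_zero hM hm (Or.inl h)
      · push_neg at h
        exact V_eq_zero hM hm (Or.inr h.le)
    rw [hV]
    simp

end Main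


section Main2

variable {A m M ρ ε R : ℝ}
variable (hM : 0 < M) (hm : 1 ≤ m - M) (hA : A = (1 - ρ)/2) (hφa : R < φ (m - M))

include hM hm hA hφa in
lemma IN_pos : 0 < ∫ r in Ioi R, V A m M r * V A m M r * r ^ ρ := by
  rw [IN_eq hM hm hA hφa]
  apply intervalIntegral.intervalIntegral_pos_of_pos_on
  · exact ((((continuous_exp.comp continuous_exp).pow 2).mul (continuous_exp.pow 2)).mul
      ((continuous_Z m M).pow 2)).intervalIntegrable _ _
  · intro s hs
    have h1 : ((s - m)/M)^2 < 1 := by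
      rw [div_pow, div_lt_one (by positivity)]
      rcases hs with ⟨h2, h3⟩
      nlinarith
    have hQ : 0 < Q m M s := lt_of_lt_of_le (by linarith) (le_max_right _ _)
    have hZ : 0 < Z m M s := by rw [Z_eq_sq]; positivity
    positivity
  · linarith

include hM hm hA hφa in
lemma main_lt (hε : 0 < ε) (hMε : 512 < ε * M^2) :
    (∫ r in Ioi R, |deriv (V A m M) r|^2 * r ^ ρ)
      < ∫ r in Ioi R,
          ((ρ - 1)^2 / (4 * r^2) + (1 + ε) / (4 * r^2 * (Real.log r)^2))
            * |V A m M r|^2 * r ^ ρ := by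
  rw [IA_eq hM hm hA hφa, IB_eq hM hm hA hφa]
  have cZ := continuous_Z m M
  have cZ' := continuous_Z' m M
  have hintA : IntervalIntegrable
      (fun s => (A * exp s * Z m M s + Z m M s / 2 + Z' m M s)^2) volume (m - M) (m + M) :=
    (((((continuous_const.mul continuous_exp).mul cZ).add (cZ.div_const 2)).add cZ').pow 2).intervalIntegrable _ _
  have hintB : IntervalIntegrable
      (fun s => (A^2 * (exp s)^2 + (1 + ε)/4) * (Z m M s)^2) volume (m - M) (m + M) :=
    (((continuous_const.mul (continuous_exp.pow 2)).add continuous_const).mul (cZ.pow 2)).intervalIntegrable _ _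
  have hintZ2 : IntervalIntegrable (fun s => (Z m M s)^2) volume (m - M) (m + M) :=
    (cZ.pow 2).intervalIntegrable _ _
  have hintZ'2 : IntervalIntegrable (fun s => (Z' m M s)^2) volume (m - M) (m + M) :=
    (cZ'.pow 2).intervalIntegrable _ _
  have hintD : IntervalIntegrable (Dfun' A m M) volume (m - M) (m + M) :=
    continuous_Dfun'.intervalIntegrable _ _
  have hsub : (∫ s in (m - M)..(m + M), (A^2 * (exp s)^2 + (1 + ε)/4) * (Z m M s)^2)
      - ∫ s in (m - M)..(m + M), (A * exp s * Z m M s + Z m M s / 2 + Z' m M s)^2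
      = ∫ s in (m - M)..(m + M),
          ((A^2 * (exp s)^2 + (1 + ε)/4) * (Z m M s)^2
            - (A * exp s * Z m M s + Z m M s / 2 + Z' m M s)^2) :=
    (intervalIntegral.integral_sub hintB hintA).symm
  have hpt : ∀ s : ℝ, (A^2 * (exp s)^2 + (1 + ε)/4) * (Z m M s)^2
      - (A * exp s * Z m M s + Z m M s / 2 + Z' m M s)^2
      = ε/4 * (Z m M s)^2 - ((Z' m M s)^2 + Dfun' A m M s) := by
    intro s
    unfold Dfun' Z'
    ring
  have hval : ∫ s in (m - M)..(m + M),
      ((A^2 * (exp s)^2 + (1 + ε)/4) * (Z m M s)^2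
        - (A * exp s * Z m M s + Z m M s / 2 + Z' m M s)^2)
      = ε/4 * (∫ s in (m - M)..(m + M), (Z m M s)^2)
        - ((∫ s in (m - M)..(m + M), (Z' m M s)^2) + 0) := by
    simp only [hpt]
    rw [intervalIntegral.integral_sub (hintZ2.const_mul _) (hintZ'2.add hintD),
      intervalIntegral.integral_add hintZ'2 hintD,
      intervalIntegral.integral_const_mul, integral_Dfun' hM]
  have hlt := sside_lt (m := m) hε hMε hM
  linarith [hsub, hval, hlt]

include hM hm in
lemma V_zero_outside {x : ℝ} (hx : x ∉ Icc (φ (m - M)) (φ (m + M))) : V A m M x = 0 := by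
  have hx' : ¬ (φ (m - M) ≤ x ∧ x ≤ φ (m + M)) := fun hcon => hx (mem_Icc.mpr hcon)
  rcases not_and_or.mp hx' with h | h
  · push_neg at h
    exact V_eq_zero hM hm (Or.inl h.le)
  · push_neg at h
    exact V_eq_zero hM hm (Or.inr h.le)

include hM hm in
lemma derivV_zero_outside {x : ℝ} (hx : x ∉ Icc (φ (m - M)) (φ (m + M))) :
    deriv (V A m M) x = 0 := by
  have hx' : ¬ (φ (m - M) ≤ x ∧ x ≤ φ (m + M)) := fun hcon => hx (mem_Icc.mpr hcon)
  rcases not_and_or.mp hx' with h | h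
  · push_neg at h
    rcases lt_or_ge x 2 with h2 | h2
    · exact deriv_V_zero h2
    · rw [deriv_V_eq hM hm (by linarith)]
      exact E_eq_zero hM (by linarith) (Or.inl h.le)
  · push_neg at h
    have h1 : 1 < x := lt_trans (one_lt_φ _) h
    rw [deriv_V_eq hM hm h1]
    exact E_eq_zero hM h1 (Or.inr h.le)

include hM hm in
lemma hasCompactSupport_cV (c : ℝ) : HasCompactSupport (fun r => c * V A m M r) := by
  apply HasCompactSupport.intro (isCompact_Icc (a := φ (m - M)) (b := φ (m + M)))
  intro x hx
  rw [V_zero_outside hM hm hx, mul_zero]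

include hM hm hφa in
lemma tsupport_cV_subset (c : ℝ) : tsupport (fun r => c * V A m M r) ⊆ Ioi R := by
  have h1 : Function.support (fun r => c * V A m M r) ⊆ Icc (φ (m - M)) (φ (m + M)) := by
    intro x hx
    by_contra hc
    apply hx
    show c * V A m M x = 0
    rw [V_zero_outside hM hm hc, mul_zero]
  refine (closure_minimal h1 isClosed_Icc).trans ?_
  intro x hx
  exact lt_of_lt_of_le hφa hx.1

include hM hm in
lemma lipschitz_cV (c : ℝ) : ∃ K : NNReal, LipschitzWith K (fun r => c * V A m M r) := by
  have hdiffW : Differentiable ℝ (fun r => c * V A m M r) :=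
    (differentiable_V hM hm).const_mul c
  have hderivW : deriv (fun r => c * V A m M r) = fun r => c * deriv (V A m M) r :=
    deriv_const_mul_field' c
  have hcont : Continuous (deriv (fun r => c * V A m M r)) := by
    rw [hderivW]
    exact continuous_const.mul (continuous_derivV hM hm)
  have hsupp : HasCompactSupport (deriv (fun r => c * V A m M r)) := by
    apply HasCompactSupport.intro (isCompact_Icc (a := φ (m - M)) (b := φ (m + M)))
    intro x hx
    rw [hderivW]
    beta_reduce
    rw [derivV_zero_outside hM hm hx, mul_zero]
  obtain ⟨x₀, hx₀⟩ := hcont.norm.exists_forall_ge_of_hasCompactSupport hsupp.norm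
  refine ⟨‖deriv (fun r => c * V A m M r) x₀‖₊, lipschitzWith_of_nnnorm_deriv_le hdiffW ?_⟩
  intro x
  rw [← NNReal.coe_le_coe, coe_nnnorm, coe_nnnorm]
  exact hx₀ x

include hM in
lemma V_mul_V_eq_zero {m₁ m₂ : ℝ} (hsep : 2*M ≤ |m₁ - m₂|) (r : ℝ) : V A m₁ M r * V A m₂ M r = 0 := by
  by_contra h
  rcases mul_ne_zero_iff.mp h with ⟨h1, h2⟩
  have hZ1 : Z m₁ M (Real.log (Real.log r)) ≠ 0 := by
    intro hz
    apply h1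
    unfold V
    split_ifs with hr
    · rfl
    · rw [hz, mul_zero]
  have hZ2 : Z m₂ M (Real.log (Real.log r)) ≠ 0 := by
    intro hz
    apply h2
    unfold V
    split_ifs with hr
    · rfl
    · rw [hz, mul_zero]
  have ha1 := abs_lt.mp (Z_ne_zero_abs hM hZ1)
  have ha2 := abs_lt.mp (Z_ne_zero_abs hM hZ2)
  rcases le_abs.mp hsep with h3 | h3 <;> linarith [ha1.1, ha1.2, ha2.1, ha2.2]

end Main2


end RevHardy

open RevHardy

/-- Infinitely many orthonormal counterexamples to any enlargement of the
logarithmic constant in the weighted Hardy inequality. -/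
theorem reverse_hardy_orthonormal_sequence (ρ : ℝ) (R : ℝ) (hR : 1 ≤ R)
    (ε : ℝ) (hε : 0 < ε) :
    ∃ u : ℕ → ℝ → ℝ,
      (∀ k, ∃ K : NNReal, LipschitzWith K (u k)) ∧
      (∀ k, HasCompactSupport (u k)) ∧
      (∀ k, tsupport (u k) ⊆ Ioi R) ∧
      (∀ j k, (∫ r in Ioi R, u j r * u k r * r ^ ρ) = if j = k then 1 else 0) ∧
      (∀ k, (∫ r in Ioi R, |deriv (u k) r|^2 * r ^ ρ)
        < ∫ r in Ioi R,
            ((ρ - 1)^2 / (4 * r^2) + (1 + ε) / (4 * r^2 * (Real.log r)^2))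
              * |u k r|^2 * r ^ ρ) := by
  set A : ℝ := (1 - ρ)/2 with hAdef
  have hA : A = (1 - ρ)/2 := hAdef
  set M : ℝ := 1 + 512/ε with hMdef
  have hMpos : 0 < M := by rw [hMdef]; positivity
  set m : ℕ → ℝ := fun k => M + 1 + Real.log (Real.log (R+3)) + (k:ℝ) * (2*M+1) with hmdef
  -- basic facts about the parameters
  have hlogR : 1 < Real.log (R+3) := by
    rw [Real.lt_log_iff_exp_lt (by linarith : (0:ℝ) < R+3)]
    have h1 : exp 1 < 2.7182818286 := Real.exp_one_lt_d9
    linarith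
  have hllR : 0 < Real.log (Real.log (R+3)) := Real.log_pos hlogR
  have hm : ∀ k : ℕ, 1 ≤ m k - M := by
    intro k
    have hk : (0:ℝ) ≤ (k:ℝ) * (2*M+1) := by positivity
    simp only [hmdef]
    linarith
  have hφa : ∀ k : ℕ, R < φ (m k - M) := by
    intro k
    have hk : (0:ℝ) ≤ (k:ℝ) * (2*M+1) := by positivity
    have h1 : Real.log (Real.log (R+3)) < m k - M := by
      simp only [hmdef]; linarith
    have h2 : Real.log (R+3) < exp (m k - M) := by
      calc Real.log (R+3) = exp (Real.log (Real.log (R+3))) :=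
            (exp_log (by linarith)).symm
        _ < exp (m k - M) := exp_lt_exp.mpr h1
    calc R < R + 3 := by linarith
      _ = exp (Real.log (R+3)) := (exp_log (by linarith)).symm
      _ < exp (exp (m k - M)) := exp_lt_exp.mpr h2
  have hMε : 512 < ε * M^2 := by
    have hM2 : ε * M^2 = ε + 1024 + 512^2/ε := by
      rw [hMdef]; field_simp; ring
    have hd : 0 < 512^2/ε := by positivity
    rw [hM2]; linarith [hd, hε]
  have hsep : ∀ j k : ℕ, j ≠ k → 2*M ≤ |m j - m k| := by
    intro j k hjk
    have habs : |m j - m k| = |(j:ℝ) - (k:ℝ)| * (2*M+1) := by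
      rw [show m j - m k = ((j:ℝ) - (k:ℝ)) * (2*M+1) by simp only [hmdef]; ring,
        abs_mul, abs_of_pos (by linarith : (0:ℝ) < 2*M+1)]
    have hone : (1:ℝ) ≤ |(j:ℝ) - (k:ℝ)| := by
      rcases hjk.lt_or_gt with h | h
      · have hjk' : (j:ℝ) < (k:ℝ) := by exact_mod_cast h
        have h2 : (j:ℝ) + 1 ≤ (k:ℝ) := by exact_mod_cast Nat.succ_le_of_lt h
        rw [abs_sub_comm, abs_of_pos (sub_pos.mpr hjk')]
        linarith
      · have hjk' : (k:ℝ) < (j:ℝ) := by exact_mod_cast h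
        have h2 : (k:ℝ) + 1 ≤ (j:ℝ) := by exact_mod_cast Nat.succ_le_of_lt h
        rw [abs_of_pos (sub_pos.mpr hjk')]
        linarith
    rw [habs]
    nlinarith
  -- the normalization constants
  set N : ℕ → ℝ := fun k => ∫ r in Ioi R, V A (m k) M r * V A (m k) M r * r ^ ρ with hNdef
  have hN : ∀ k, 0 < N k := fun k => IN_pos hMpos (hm k) hA (hφa k)
  set c : ℕ → ℝ := fun k => (Real.sqrt (N k))⁻¹ with hcdef
  have hc : ∀ k, 0 < c k := fun k => inv_pos.mpr (Real.sqrt_pos.mpr (hN k))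
  have hc2 : ∀ k, (c k)^2 * N k = 1 := by
    intro k
    rw [hcdef]
    simp only
    rw [← Real.sqrt_inv, Real.sq_sqrt (inv_nonneg.mpr (hN k).le)]
    exact inv_mul_cancel₀ (hN k).ne'
  refine ⟨fun k r => c k * V A (m k) M r, ?_, ?_, ?_, ?_, ?_⟩
  · exact fun k => lipschitz_cV hMpos (hm k) (c k)
  · exact fun k => hasCompactSupport_cV hMpos (hm k) (c k)
  · exact fun k => tsupport_cV_subset hMpos (hm k) (hφa k) (c k)
  · intro j k
    by_cases hjk : j = k
    · subst hjk
      rw [if_pos rfl]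
      beta_reduce
      rw [show (fun r => (c j * V A (m j) M r) * (c j * V A (m j) M r) * r ^ ρ)
          = fun r => (c j)^2 * (V A (m j) M r * V A (m j) M r * r ^ ρ) from
        funext fun r => by ring]
      rw [MeasureTheory.integral_const_mul]
      exact hc2 j
    · rw [if_neg hjk]
      beta_reduce
      rw [show (fun r => (c j * V A (m j) M r) * (c k * V A (m k) M r) * r ^ ρ)
          = fun _ => (0:ℝ) from funext fun r => by
        rw [show (c j * V A (m j) M r) * (c k * V A (m k) M r) * r ^ ρ
            = (c j * c k * r ^ ρ) * (V A (m j) M r * V A (m k) M r) by ring,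
          V_mul_V_eq_zero hMpos (hsep j k hjk) r, mul_zero]]
      simp
  · intro k
    beta_reduce
    rw [deriv_const_mul_field' (c k)]
    rw [show (fun r => |c k * deriv (V A (m k) M) r|^2 * r ^ ρ)
        = fun r => (c k)^2 * (|deriv (V A (m k) M) r|^2 * r ^ ρ) from
      funext fun r => by rw [abs_mul, mul_pow, sq_abs (c k)]; ring]
    rw [show (fun r => ((ρ - 1)^2 / (4 * r^2) + (1 + ε) / (4 * r^2 * (Real.log r)^2))
          * |c k * V A (m k) M r|^2 * r ^ ρ)
        = fun r => (c k)^2 * (((ρ - 1)^2 / (4 * r^2) + (1 + ε) / (4 * r^2 * (Real.log r)^2))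
          * |V A (m k) M r|^2 * r ^ ρ) from
      funext fun r => by rw [abs_mul, mul_pow, sq_abs (c k)]; ring]
    rw [MeasureTheory.integral_const_mul, MeasureTheory.integral_const_mul]
    have hlt := main_lt hMpos (hm k) hA (hφa k) hε hMε
    have hcpos : 0 < (c k)^2 := pow_pos (hc k) 2
    exact mul_lt_mul_of_pos_left hlt hcpos
end
end

section
/- Let α > 0, β ∈ ℝ with α - β > 1 and 2α - β > 2, λ ∈ ℝ, and W(r) = ∫_r^∞ λ s^β sin(s^α) ds. Then as r → ∞, ∫_r^∞ W(s) ds converges and -∫_r^∞ W(s) ds = (λ sin(r^α))/(α² r^{2α-β-2}) + O(r^{2+β-3α}). -/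
open MeasureTheory Set Real Filter Asymptotics

/-- Tail oscillatory integral. -/
noncomputable def tailInt (α γ : ℝ) (g : ℝ → ℝ) (r : ℝ) : ℝ :=
  ∫ s in Set.Ioi r, s ^ γ * g (s ^ α)

lemma osc_continuousOn (α γ : ℝ) (g : ℝ → ℝ) (hgc : Continuous g) :
    ContinuousOn (fun s : ℝ => s ^ γ * g (s ^ α)) (Set.Ioi 0) := by
  apply ContinuousOn.mul
  · exact fun x hx => (Real.continuousAt_rpow_const x γ (Or.inl (ne_of_gt hx))).continuousWithinAt
  · exact fun x hx => ((hgc.continuousAt).comp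
      (Real.continuousAt_rpow_const x α (Or.inl (ne_of_gt hx)))).continuousWithinAt

lemma osc_intervalIntegrable (α γ : ℝ) (g : ℝ → ℝ) (hgc : Continuous g) (r b : ℝ)
    (hr : 0 < r) (hb : 0 < b) :
    IntervalIntegrable (fun s : ℝ => s ^ γ * g (s ^ α)) volume r b := by
  apply ContinuousOn.intervalIntegrable
  apply (osc_continuousOn α γ g hgc).mono
  intro x hx
  rcases le_total r b with h | h <;> simp only [Set.uIcc_of_le, Set.uIcc_of_ge, h] at hx
  · exact lt_of_lt_of_le hr hx.1
  · exact lt_of_lt_of_le hb hx.1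

lemma osc_integrableOn (α γ : ℝ) (g : ℝ → ℝ) (hgc : Continuous g) (hg : ∀ x, |g x| ≤ 1)
    (hγ : γ < -1) (r : ℝ) (hr : 0 < r) :
    IntegrableOn (fun s : ℝ => s ^ γ * g (s ^ α)) (Set.Ioi r) := by
  apply Integrable.mono' (integrableOn_Ioi_rpow_of_lt hγ hr)
  · exact ((osc_continuousOn α γ g hgc).mono (Set.Ioi_subset_Ioi hr.le)).aestronglyMeasurable
      measurableSet_Ioi
  · filter_upwards [ae_restrict_mem measurableSet_Ioi] with s hs
    have hs0 : 0 < s := hr.trans hs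
    rw [Real.norm_eq_abs, abs_mul, abs_of_nonneg (Real.rpow_nonneg hs0.le γ)]
    calc s ^ γ * |g (s ^ α)| ≤ s ^ γ * 1 :=
          mul_le_mul_of_nonneg_left (hg _) (Real.rpow_nonneg hs0.le γ)
      _ = s ^ γ := mul_one _

lemma ibp_gen (α : ℝ) (hα : 0 < α) (g G : ℝ → ℝ) (hgc : Continuous g) (hGc : Continuous G)
    (hG : ∀ x, HasDerivAt G (g x) x) (γ r b : ℝ) (hr : 0 < r) (hrb : r ≤ b) :
    ∫ s in r..b, s ^ γ * g (s ^ α)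
      = (1/α) * (b ^ (γ + 1 - α) * G (b ^ α) - r ^ (γ + 1 - α) * G (r ^ α))
        - ((γ + 1 - α)/α) * ∫ s in r..b, s ^ (γ - α) * G (s ^ α) := by
  have hb : 0 < b := hr.trans_le hrb
  set u : ℝ → ℝ := fun s => (1/α) * s ^ (γ + 1 - α) with hu_def
  set u' : ℝ → ℝ := fun s => ((γ + 1 - α)/α) * s ^ (γ - α) with hu'_def
  set v : ℝ → ℝ := fun s => G (s ^ α) with hv_def
  set v' : ℝ → ℝ := fun s => g (s ^ α) * (α * s ^ (α - 1)) with hv'_def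
  have huicc : Set.uIcc r b ⊆ Set.Ioi (0:ℝ) := by
    rw [Set.uIcc_of_le hrb]; intro x hx; exact lt_of_lt_of_le hr hx.1
  have hu : ∀ x ∈ Set.uIcc r b, HasDerivAt u (u' x) x := by
    intro x hx
    have hx0 : 0 < x := huicc hx
    have := (Real.hasDerivAt_rpow_const (x := x) (p := γ + 1 - α) (Or.inl hx0.ne')).const_mul (1/α)
    refine this.congr_deriv ?_
    simp only [hu'_def]
    rw [show γ + 1 - α - 1 = γ - α by ring]; ring
  have hv : ∀ x ∈ Set.uIcc r b, HasDerivAt v (v' x) x := by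
    intro x hx
    have hx0 : 0 < x := huicc hx
    have h1 : HasDerivAt (fun s : ℝ => s ^ α) (α * x ^ (α - 1)) x :=
      Real.hasDerivAt_rpow_const (Or.inl hx0.ne')
    exact (hG (x ^ α)).comp x h1
  have hu' : IntervalIntegrable u' volume r b := by
    apply ContinuousOn.intervalIntegrable
    intro x hx
    exact (continuousAt_const.mul (Real.continuousAt_rpow_const x (γ - α)
      (Or.inl (ne_of_gt (huicc hx))))).continuousWithinAt
  have hv' : IntervalIntegrable v' volume r b := by
    apply ContinuousOn.intervalIntegrable
    intro x hx
    exact (((hgc.continuousAt.comp (Real.continuousAt_rpow_const x α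
      (Or.inl (ne_of_gt (huicc hx))))).mul ((Real.continuousAt_rpow_const x (α - 1)
      (Or.inl (ne_of_gt (huicc hx)))).const_mul α))).continuousWithinAt
  have key := intervalIntegral.integral_mul_deriv_eq_deriv_mul hu hv hu' hv'
  have h1 : ∫ x in r..b, u x * v' x = ∫ s in r..b, s ^ γ * g (s ^ α) := by
    apply intervalIntegral.integral_congr
    intro x hx
    have hx0 : 0 < x := huicc hx
    have : x ^ (γ + 1 - α) * x ^ (α - 1) = x ^ γ := by
      rw [← Real.rpow_add hx0]; ring_nf
    show (1/α) * x ^ (γ + 1 - α) * (g (x ^ α) * (α * x ^ (α - 1))) = x ^ γ * g (x ^ α)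
    calc (1/α) * x ^ (γ + 1 - α) * (g (x ^ α) * (α * x ^ (α - 1)))
        = (x ^ (γ + 1 - α) * x ^ (α - 1)) * g (x ^ α) * (α / α) := by ring
      _ = x ^ γ * g (x ^ α) := by rw [this, div_self hα.ne']; ring
  have h2 : ∫ x in r..b, u' x * v x = ((γ + 1 - α)/α) * ∫ s in r..b, s ^ (γ - α) * G (s ^ α) := by
    rw [← intervalIntegral.integral_const_mul]
    apply intervalIntegral.integral_congr
    intro x hx
    simp only [hu'_def, hv_def]; ring
  rw [h1, h2] at key
  rw [key]
  simp only [hu_def, hv_def]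
  ring

lemma tendsto_ibp (α : ℝ) (hα : 0 < α) (g G : ℝ → ℝ) (hgc : Continuous g) (hGc : Continuous G)
    (hG : ∀ x, HasDerivAt G (g x) x) (hGbd : ∀ x, |G x| ≤ 1) (γ r : ℝ)
    (hγα : γ + 1 - α < 0) (hr : 0 < r) :
    Tendsto (fun b => ∫ s in r..b, s ^ γ * g (s ^ α)) atTop
      (nhds (-((1/α) * (r ^ (γ + 1 - α) * G (r ^ α)))
        - ((γ + 1 - α)/α) * tailInt α (γ - α) G r)) := by
  have hγα' : γ - α < -1 := by linarith
  have h1 : Tendsto (fun b => ∫ s in r..b, s ^ (γ - α) * G (s ^ α)) atTop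
      (nhds (tailInt α (γ - α) G r)) :=
    intervalIntegral_tendsto_integral_Ioi r (osc_integrableOn α (γ - α) G hGc hGbd hγα' r hr)
      tendsto_id
  have h2 : Tendsto (fun b : ℝ => b ^ (γ + 1 - α) * G (b ^ α)) atTop (nhds 0) := by
    have hlim : Tendsto (fun b : ℝ => b ^ (γ + 1 - α)) atTop (nhds 0) := by
      have := tendsto_rpow_neg_atTop (y := -(γ + 1 - α)) (by linarith)
      simpa using this
    refine squeeze_zero_norm' ?_ hlim
    filter_upwards [eventually_gt_atTop 0] with b hb
    rw [Real.norm_eq_abs, abs_mul, abs_of_nonneg (Real.rpow_nonneg hb.le _)]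
    calc b ^ (γ + 1 - α) * |G (b ^ α)| ≤ b ^ (γ + 1 - α) * 1 :=
          mul_le_mul_of_nonneg_left (hGbd _) (Real.rpow_nonneg hb.le _)
      _ = b ^ (γ + 1 - α) := mul_one _
  have h3 : Tendsto (fun b : ℝ => (1/α) * (b ^ (γ + 1 - α) * G (b ^ α)
        - r ^ (γ + 1 - α) * G (r ^ α))
      - ((γ + 1 - α)/α) * ∫ s in r..b, s ^ (γ - α) * G (s ^ α)) atTop
      (nhds ((1/α) * (0 - r ^ (γ + 1 - α) * G (r ^ α))
        - ((γ + 1 - α)/α) * tailInt α (γ - α) G r)) :=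
    (((h2.sub_const _).const_mul _).sub (h1.const_mul _))
  have h4 : ((1:ℝ)/α) * (0 - r ^ (γ + 1 - α) * G (r ^ α))
      - ((γ + 1 - α)/α) * tailInt α (γ - α) G r
      = -((1/α) * (r ^ (γ + 1 - α) * G (r ^ α))) - ((γ + 1 - α)/α) * tailInt α (γ - α) G r := by
    ring
  rw [h4] at h3
  apply h3.congr'
  filter_upwards [eventually_ge_atTop r] with b hb
  exact (ibp_gen α hα g G hgc hGc hG γ r b hr hb).symm

lemma tail_eq (α : ℝ) (hα : 0 < α) (g G : ℝ → ℝ) (hgc : Continuous g) (hGc : Continuous G)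
    (hG : ∀ x, HasDerivAt G (g x) x) (hgbd : ∀ x, |g x| ≤ 1) (hGbd : ∀ x, |G x| ≤ 1) (γ r : ℝ)
    (hγ : γ < -1) (hγα : γ + 1 - α < 0) (hr : 0 < r) :
    tailInt α γ g r = -((1/α) * (r ^ (γ + 1 - α) * G (r ^ α)))
      - ((γ + 1 - α)/α) * tailInt α (γ - α) G r :=
  tendsto_nhds_unique
    (intervalIntegral_tendsto_integral_Ioi r (osc_integrableOn α γ g hgc hgbd hγ r hr) tendsto_id)
    (tendsto_ibp α hα g G hgc hGc hG hGbd γ r hγα hr)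

lemma tail_abs_le (α γ : ℝ) (g : ℝ → ℝ) (hgc : Continuous g) (hgbd : ∀ x, |g x| ≤ 1)
    (hγ : γ < -1) (r : ℝ) (hr : 0 < r) :
    |tailInt α γ g r| ≤ r ^ (γ + 1) / (-(γ + 1)) := by
  have hint := osc_integrableOn α γ g hgc hgbd hγ r hr
  have h1 : |tailInt α γ g r| ≤ ∫ s in Set.Ioi r, |s ^ γ * g (s ^ α)| := by
    have := norm_integral_le_integral_norm (μ := volume.restrict (Set.Ioi r))
      (f := fun s : ℝ => s ^ γ * g (s ^ α))
    simp only [Real.norm_eq_abs, tailInt] at this ⊢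
    exact this
  have h2 : ∫ s in Set.Ioi r, |s ^ γ * g (s ^ α)| ≤ ∫ s in Set.Ioi r, s ^ γ := by
    apply setIntegral_mono_on hint.abs (integrableOn_Ioi_rpow_of_lt hγ hr) measurableSet_Ioi
    intro s hs
    have hs0 : 0 < s := hr.trans hs
    rw [abs_mul, abs_of_nonneg (Real.rpow_nonneg hs0.le γ)]
    calc s ^ γ * |g (s ^ α)| ≤ s ^ γ * 1 :=
          mul_le_mul_of_nonneg_left (hgbd _) (Real.rpow_nonneg hs0.le γ)
      _ = s ^ γ := mul_one _
  have h3 : ∫ s in Set.Ioi r, s ^ γ = r ^ (γ + 1) / (-(γ + 1)) := by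
    rw [integral_Ioi_rpow_of_lt hγ hr, div_neg, neg_div]
  linarith

lemma tail_bound (α : ℝ) (hα : 0 < α) (g G : ℝ → ℝ) (hgc : Continuous g) (hGc : Continuous G)
    (hG : ∀ x, HasDerivAt G (g x) x) (hgbd : ∀ x, |g x| ≤ 1) (hGbd : ∀ x, |G x| ≤ 1) (γ r : ℝ)
    (hγ : γ < -1) (hγα : γ + 1 - α < 0) (hr : 0 < r) :
    |tailInt α γ g r| ≤ (1/α + |γ + 1 - α| / (α * (α - 1 - γ))) * r ^ (γ + 1 - α) := by
  rw [tail_eq α hα g G hgc hGc hG hgbd hGbd γ r hγ hγα hr]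
  have hpow : (0:ℝ) ≤ r ^ (γ + 1 - α) := Real.rpow_nonneg hr.le _
  have hb1 : |(1/α) * (r ^ (γ + 1 - α) * G (r ^ α))| ≤ (1/α) * r ^ (γ + 1 - α) := by
    rw [abs_mul, abs_mul, abs_of_nonneg (by positivity : (0:ℝ) ≤ 1/α), abs_of_nonneg hpow]
    have := hGbd (r ^ α)
    calc (1/α) * (r ^ (γ + 1 - α) * |G (r ^ α)|) ≤ (1/α) * (r ^ (γ + 1 - α) * 1) := by
          apply mul_le_mul_of_nonneg_left _ (by positivity)
          exact mul_le_mul_of_nonneg_left this hpow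
      _ = (1/α) * r ^ (γ + 1 - α) := by ring
  have hb2 : |tailInt α (γ - α) G r| ≤ r ^ (γ + 1 - α) / (α - 1 - γ) := by
    have := tail_abs_le α (γ - α) G hGc hGbd (by linarith) r hr
    have he : γ - α + 1 = γ + 1 - α := by ring
    rw [he] at this
    have he2 : -(γ + 1 - α) = α - 1 - γ := by ring
    rwa [he2] at this
  calc |(-((1/α) * (r ^ (γ + 1 - α) * G (r ^ α)))
        - ((γ + 1 - α)/α) * tailInt α (γ - α) G r)|
      ≤ |(1/α) * (r ^ (γ + 1 - α) * G (r ^ α))| + |γ + 1 - α|/α * |tailInt α (γ - α) G r| := by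
        rw [sub_eq_add_neg]
        refine (abs_add_le _ _).trans (le_of_eq ?_)
        rw [abs_neg, abs_neg]
        congr 1
        rw [abs_mul, abs_div, abs_of_nonneg hα.le]
    _ ≤ (1/α) * r ^ (γ + 1 - α) + |γ + 1 - α|/α * (r ^ (γ + 1 - α) / (α - 1 - γ)) := by
        refine add_le_add hb1 (mul_le_mul_of_nonneg_left hb2 (by positivity))
    _ = (1/α + |γ + 1 - α| / (α * (α - 1 - γ))) * r ^ (γ + 1 - α) := by
        have h0 : α - 1 - γ > 0 := by linarith
        field_simp

lemma tailInt_neg (α γ : ℝ) (g : ℝ → ℝ) (r : ℝ) :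
    tailInt α γ (fun x => -(g x)) r = -tailInt α γ g r := by
  simp [tailInt, mul_neg, integral_neg]

lemma hasDerivAt_ncos (x : ℝ) : HasDerivAt (fun y => -Real.cos y) (Real.sin x) x := by
  have h := (Real.hasDerivAt_cos x).neg
  simp only [neg_neg] at h
  exact h

lemma ncos_bd (x : ℝ) : |-Real.cos x| ≤ 1 := by
  rw [abs_neg]; exact Real.abs_cos_le_one x

/-- Tendsto for the sine tail. -/
lemma tendsto_sin_tail (α : ℝ) (hα : 0 < α) (γ r : ℝ) (hγα : γ + 1 - α < 0) (hr : 0 < r) :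
    Tendsto (fun b => ∫ s in r..b, s ^ γ * Real.sin (s ^ α)) atTop
      (nhds ((1/α) * (r ^ (γ + 1 - α) * Real.cos (r ^ α))
        + ((γ + 1 - α)/α) * tailInt α (γ - α) Real.cos r)) := by
  have h := tendsto_ibp α hα Real.sin (fun y => -Real.cos y) Real.continuous_sin
    Real.continuous_cos.neg hasDerivAt_ncos ncos_bd γ r hγα hr
  rw [tailInt_neg] at h
  convert h using 2
  ring

/-- Tendsto for the cosine tail. -/
lemma tendsto_cos_tail (α : ℝ) (hα : 0 < α) (γ r : ℝ) (hγα : γ + 1 - α < 0) (hr : 0 < r) :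
    Tendsto (fun b => ∫ s in r..b, s ^ γ * Real.cos (s ^ α)) atTop
      (nhds (-((1/α) * (r ^ (γ + 1 - α) * Real.sin (r ^ α)))
        - ((γ + 1 - α)/α) * tailInt α (γ - α) Real.sin r)) :=
  tendsto_ibp α hα Real.cos Real.sin Real.continuous_cos Real.continuous_sin
    Real.hasDerivAt_sin Real.abs_sin_le_one γ r hγα hr

lemma tail_cos_eq (α : ℝ) (hα : 0 < α) (γ r : ℝ) (hγ : γ < -1) (hγα : γ + 1 - α < 0)
    (hr : 0 < r) :
    tailInt α γ Real.cos r = -((1/α) * (r ^ (γ + 1 - α) * Real.sin (r ^ α)))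
      - ((γ + 1 - α)/α) * tailInt α (γ - α) Real.sin r :=
  tail_eq α hα Real.cos Real.sin Real.continuous_cos Real.continuous_sin
    Real.hasDerivAt_sin Real.abs_cos_le_one Real.abs_sin_le_one γ r hγ hγα hr

lemma tail_sin_bound (α : ℝ) (hα : 0 < α) (γ r : ℝ) (hγ : γ < -1) (hγα : γ + 1 - α < 0)
    (hr : 0 < r) :
    |tailInt α γ Real.sin r| ≤ (1/α + |γ + 1 - α| / (α * (α - 1 - γ))) * r ^ (γ + 1 - α) := by
  have h := tail_bound α hα Real.sin (fun y => -Real.cos y) Real.continuous_sin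
    Real.continuous_cos.neg hasDerivAt_ncos Real.abs_sin_le_one ncos_bd γ r hγ hγα hr
  exact h

lemma tail_cos_bound (α : ℝ) (hα : 0 < α) (γ r : ℝ) (hγ : γ < -1) (hγα : γ + 1 - α < 0)
    (hr : 0 < r) :
    |tailInt α γ Real.cos r| ≤ (1/α + |γ + 1 - α| / (α * (α - 1 - γ))) * r ^ (γ + 1 - α) :=
  tail_bound α hα Real.cos Real.sin Real.continuous_cos Real.continuous_sin
    Real.hasDerivAt_sin Real.abs_cos_le_one Real.abs_sin_le_one γ r hγ hγα hr

/-- Derivative of the tail integral. -/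
lemma hasDerivAt_tailInt (α γ : ℝ) (g : ℝ → ℝ) (hgc : Continuous g) (hgbd : ∀ x, |g x| ≤ 1)
    (hγ : γ < -1) (x : ℝ) (hx : 0 < x) :
    HasDerivAt (tailInt α γ g) (-(x ^ γ * g (x ^ α))) x := by
  set c := x / 2 with hc
  have hc0 : 0 < c := by positivity
  have hcx : c < x := by rw [hc]; linarith
  have key : ∀ y ∈ Set.Ioi c, tailInt α γ g y
      = tailInt α γ g c - ∫ s in c..y, s ^ γ * g (s ^ α) := by
    intro y hy
    have hcy : c ≤ y := (le_of_lt hy)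
    have hsplit : tailInt α γ g c
        = (∫ s in Set.Ioc c y, s ^ γ * g (s ^ α)) + tailInt α γ g y := by
      rw [tailInt, tailInt, ← setIntegral_union (Set.Ioc_disjoint_Ioi le_rfl)
        measurableSet_Ioi
        ((osc_integrableOn α γ g hgc hgbd hγ c hc0).mono_set Set.Ioc_subset_Ioi_self)
        ((osc_integrableOn α γ g hgc hgbd hγ c hc0).mono_set (Set.Ioi_subset_Ioi hcy)),
        Set.Ioc_union_Ioi_eq_Ioi hcy]
    rw [intervalIntegral.integral_of_le hcy]
    rw [hsplit]; ring
  have hF : HasDerivAt (fun y => tailInt α γ g c - ∫ s in c..y, s ^ γ * g (s ^ α))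
      (-(x ^ γ * g (x ^ α))) x := by
    have hcont : ContinuousAt (fun s : ℝ => s ^ γ * g (s ^ α)) x :=
      (osc_continuousOn α γ g hgc).continuousAt (Ioi_mem_nhds hx)
    have hder := intervalIntegral.integral_hasDerivAt_right
      (osc_intervalIntegrable α γ g hgc c x hc0 hx)
      (ContinuousOn.stronglyMeasurableAtFilter isOpen_Ioi (osc_continuousOn α γ g hgc) x hx)
      hcont
    exact hder.const_sub (tailInt α γ g c)
  apply hF.congr_of_eventuallyEq
  filter_upwards [Ioi_mem_nhds hcx] with y hy
  exact key y hy

/-- Asymptotics of the second tail integral U(r) = -∫_r^∞ W(s) ds, where W is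
the tail antiderivative of the oscillating potential λ r^β sin(r^α). -/
theorem second_tail_asymptotics (α β lam : ℝ) (hα : 0 < α) (hαβ : 1 < α - β)
    (hαβ2 : 2 < 2 * α - β) (W : ℝ → ℝ)
    (hW : ∀ r : ℝ, 0 < r →
      Tendsto (fun b => ∫ s in r..b, lam * s ^ β * Real.sin (s ^ α)) atTop (nhds (W r))) :
    ∃ U : ℝ → ℝ,
      (∀ r : ℝ, 0 < r →
        Tendsto (fun b => ∫ s in r..b, W s) atTop (nhds (-U r)))
      ∧ (fun r => U r - lam * Real.sin (r ^ α) / (α^2 * r ^ (2 * α - β - 2)))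
          =O[atTop] fun r => r ^ (2 + β - 3 * α) := by
  have e1 : β + 1 - α < 0 := by linarith
  have e2 : β - α < -1 := by linarith
  have e3 : β + 1 - 2*α < -1 := by linarith
  have e4 : β - 2*α < -1 := by linarith
  have e5 : β + 2 - 2*α < 0 := by linarith
  have e6 : β + 2 - 3*α < 0 := by linarith
  set c1 : ℝ := lam * (β + 1 - α) / α with hc1
  set K : ℝ → ℝ := tailInt α (β - α) Real.cos with hKdef
  set J : ℝ → ℝ := tailInt α (β + 1 - 2*α) Real.sin with hJdef
  set M : ℝ → ℝ := tailInt α (β - 2*α) Real.sin with hMdef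
  set IC : ℝ → ℝ := fun r => -((1/α) * (r ^ (β + 2 - 2*α) * Real.sin (r ^ α)))
      - ((β + 2 - 2*α)/α) * J r with hICdef
  -- refined formula for W
  have hWeq : ∀ s : ℝ, 0 < s →
      W s = lam/α * (s ^ (β + 1 - α) * Real.cos (s ^ α)) + c1 * K s := by
    intro s hs
    have h1 := (tendsto_sin_tail α hα β s (by linarith) hs).const_mul lam
    have h2 : (fun b => ∫ x in s..b, lam * x ^ β * Real.sin (x ^ α))
        = fun b => lam * ∫ x in s..b, x ^ β * Real.sin (x ^ α) := by
      funext b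
      rw [← intervalIntegral.integral_const_mul]
      apply intervalIntegral.integral_congr
      intro x _
      simp only []; ring
    have hW' := hW s hs
    rw [h2] at hW'
    have h3 := tendsto_nhds_unique hW' h1
    rw [h3]
    ring
  -- derivative of K
  have hKder : ∀ x : ℝ, 0 < x → HasDerivAt K (-(x ^ (β - α) * Real.cos (x ^ α))) x := by
    intro x hx
    exact hasDerivAt_tailInt α (β - α) Real.cos Real.continuous_cos Real.abs_cos_le_one e2 x hx
  -- integration by parts for ∫ K
  have hIK : ∀ r : ℝ, 0 < r → ∀ b : ℝ, r ≤ b →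
      ∫ s in r..b, K s = b * K b - r * K r + ∫ s in r..b, s ^ (β + 1 - α) * Real.cos (s ^ α) := by
    intro r hr b hb
    have hb0 : 0 < b := hr.trans_le hb
    have huicc : Set.uIcc r b ⊆ Set.Ioi (0:ℝ) := by
      rw [Set.uIcc_of_le hb]; exact fun x hx => lt_of_lt_of_le hr hx.1
    have key := intervalIntegral.integral_mul_deriv_eq_deriv_mul
      (u := fun s : ℝ => s) (u' := fun _ => (1:ℝ)) (v := K)
      (v' := fun s : ℝ => -(s ^ (β - α) * Real.cos (s ^ α)))
      (fun x _ => hasDerivAt_id x) (fun x hx => hKder x (huicc hx))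
      intervalIntegrable_const
      ((osc_intervalIntegrable α (β - α) Real.cos Real.continuous_cos r b hr hb0).neg)
    have l1 : ∫ x in r..b, x * -(x ^ (β - α) * Real.cos (x ^ α))
        = -∫ s in r..b, s ^ (β + 1 - α) * Real.cos (s ^ α) := by
      rw [← intervalIntegral.integral_neg]
      apply intervalIntegral.integral_congr
      intro x hx
      have hx0 : 0 < x := huicc hx
      have hpow : x ^ (β + 1 - α) = x ^ (β - α) * x := by
        rw [show β + 1 - α = (β - α) + 1 by ring, Real.rpow_add_one hx0.ne']
      simp only []
      rw [hpow]; ring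
    have l2 : ∫ x in r..b, (1:ℝ) * K x = ∫ s in r..b, K s := by
      simp
    rw [l1, l2] at key
    linarith
  -- b * K b → 0
  have hKlim : Tendsto (fun b : ℝ => b * K b) atTop (nhds 0) := by
    have hlim : Tendsto (fun b : ℝ =>
        (1/α + |β - α + 1 - α| / (α * (α - 1 - (β - α)))) * b ^ (β - α + 1 - α + 1))
        atTop (nhds 0) := by
      have h0 : Tendsto (fun b : ℝ => b ^ (-(2*α - β - 2))) atTop (nhds 0) :=
        tendsto_rpow_neg_atTop (by linarith)
      rw [show β - α + 1 - α + 1 = -(2*α - β - 2) by ring]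
      simpa using h0.const_mul (1/α + |β - α + 1 - α| / (α * (α - 1 - (β - α))))
    refine squeeze_zero_norm' ?_ hlim
    filter_upwards [eventually_gt_atTop 0] with b hb
    have h := tail_cos_bound α hα (β - α) b e2 (by linarith) hb
    rw [Real.norm_eq_abs, abs_mul, abs_of_pos hb]
    calc b * |K b| ≤ b * ((1/α + |β - α + 1 - α| / (α * (α - 1 - (β - α)))) * b ^ (β - α + 1 - α))
          := mul_le_mul_of_nonneg_left h hb.le
      _ = (1/α + |β - α + 1 - α| / (α * (α - 1 - (β - α)))) * b ^ (β - α + 1 - α + 1) := by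
          rw [Real.rpow_add_one (ne_of_gt hb)]; ring
  -- the cosine integral tends to IC r
  have hcosIC : ∀ r : ℝ, 0 < r →
      Tendsto (fun b => ∫ s in r..b, s ^ (β + 1 - α) * Real.cos (s ^ α)) atTop (nhds (IC r)) := by
    intro r hr
    have h := tendsto_cos_tail α hα (β + 1 - α) r (by linarith) hr
    rw [show β + 1 - α + 1 - α = β + 2 - 2*α by ring,
      show β + 1 - α - α = β + 1 - 2*α by ring] at h
    exact h
  -- ∫ K tends
  have hKtend : ∀ r : ℝ, 0 < r →
      Tendsto (fun b => ∫ s in r..b, K s) atTop (nhds (IC r - r * K r)) := by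
    intro r hr
    have h := (hKlim.sub_const (r * K r)).add (hcosIC r hr)
    have hval : (0 - r * K r) + IC r = IC r - r * K r := by ring
    rw [hval] at h
    apply h.congr'
    filter_upwards [eventually_ge_atTop r] with b hb
    rw [hIK r hr b hb]
  refine ⟨fun r => -((lam/α + c1) * IC r - c1 * (r * K r)), ?_, ?_⟩
  · -- part 1
    intro r hr
    simp only [neg_neg]
    have huW : ∀ b : ℝ, r ≤ b → ∫ s in r..b, W s
        = (lam/α) * (∫ s in r..b, s ^ (β + 1 - α) * Real.cos (s ^ α)) + c1 * ∫ s in r..b, K s := by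
      intro b hb
      have hb0 : 0 < b := hr.trans_le hb
      have huicc : Set.uIcc r b ⊆ Set.Ioi (0:ℝ) := by
        rw [Set.uIcc_of_le hb]; exact fun x hx => lt_of_lt_of_le hr hx.1
      have i1 : IntervalIntegrable (fun s : ℝ => s ^ (β + 1 - α) * Real.cos (s ^ α)) volume r b :=
        osc_intervalIntegrable α (β + 1 - α) Real.cos Real.continuous_cos r b hr hb0
      have i2 : IntervalIntegrable K volume r b := by
        apply ContinuousOn.intervalIntegrable
        exact fun x hx => ((hKder x (huicc hx)).continuousAt).continuousWithinAt
      have hcongr : ∫ s in r..b, W s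
          = ∫ s in r..b, ((lam/α) * (s ^ (β + 1 - α) * Real.cos (s ^ α)) + c1 * K s) := by
        apply intervalIntegral.integral_congr
        intro x hx
        exact hWeq x (huicc hx)
      rw [hcongr, intervalIntegral.integral_add (i1.const_mul _) (i2.const_mul _),
        intervalIntegral.integral_const_mul, intervalIntegral.integral_const_mul]
    have h := ((hcosIC r hr).const_mul (lam/α)).add ((hKtend r hr).const_mul c1)
    have hval : (lam/α) * IC r + c1 * (IC r - r * K r)
        = (lam/α + c1) * IC r - c1 * (r * K r) := by ring
    rw [hval] at h
    apply h.congr'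
    filter_upwards [eventually_ge_atTop r] with b hb
    exact (huW b hb).symm
  · -- part 2
    rw [isBigO_iff]
    refine ⟨|(lam/α + c1) * ((β + 2 - 2*α)/α)|
        * (1/α + |β + 2 - 3*α| / (α * (α - 1 - (β + 1 - 2*α))))
      + |c1 * ((β + 1 - 2*α)/α)|
        * (1/α + |β + 1 - 3*α| / (α * (α - 1 - (β - 2*α)))), ?_⟩
    filter_upwards [eventually_ge_atTop 1] with r hr1
    have hr0 : (0:ℝ) < r := lt_of_lt_of_le one_pos hr1
    have hmain : lam * Real.sin (r ^ α) / (α^2 * r ^ (2*α - β - 2))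
        = lam/α^2 * (r ^ (β + 2 - 2*α) * Real.sin (r ^ α)) := by
      have h1 : r ^ (β + 2 - 2*α) = (r ^ (2*α - β - 2))⁻¹ := by
        rw [← Real.rpow_neg hr0.le]
        congr 1; ring
      rw [h1]
      have hrp : r ^ (2*α - β - 2) ≠ 0 := ne_of_gt (Real.rpow_pos_of_pos hr0 _)
      field_simp
    have hKr : K r = -((1/α) * (r ^ (β + 1 - 2*α) * Real.sin (r ^ α)))
        - ((β + 1 - 2*α)/α) * M r := by
      have h := tail_cos_eq α hα (β - α) r e2 (by linarith) hr0
      rw [show β - α + 1 - α = β + 1 - 2*α by ring,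
        show β - α - α = β - 2*α by ring] at h
      exact h
    have hr2 : r * r ^ (β + 1 - 2*α) = r ^ (β + 2 - 2*α) := by
      rw [show β + 2 - 2*α = (β + 1 - 2*α) + 1 by ring, Real.rpow_add_one hr0.ne']
      ring
    have hUD : -((lam/α + c1) * IC r - c1 * (r * K r))
          - lam * Real.sin (r ^ α) / (α^2 * r ^ (2*α - β - 2))
        = ((lam/α + c1) * ((β + 2 - 2*α)/α)) * J r
          - (c1 * ((β + 1 - 2*α)/α)) * (r * M r) := by
      rw [hmain, hKr, hICdef]
      simp only []
      rw [← hr2, hc1]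
      field_simp
      ring
    have hJb : |J r| ≤ (1/α + |β + 2 - 3*α| / (α * (α - 1 - (β + 1 - 2*α))))
        * r ^ (β + 2 - 3*α) := by
      have h := tail_sin_bound α hα (β + 1 - 2*α) r e3 (by linarith) hr0
      rwa [show β + 1 - 2*α + 1 - α = β + 2 - 3*α by ring] at h
    have hMb : |M r| ≤ (1/α + |β + 1 - 3*α| / (α * (α - 1 - (β - 2*α))))
        * r ^ (β + 1 - 3*α) := by
      have h := tail_sin_bound α hα (β - 2*α) r e4 (by linarith) hr0
      rwa [show β - 2*α + 1 - α = β + 1 - 3*α by ring] at h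
    have hr3 : r * r ^ (β + 1 - 3*α) = r ^ (β + 2 - 3*α) := by
      rw [show β + 2 - 3*α = (β + 1 - 3*α) + 1 by ring, Real.rpow_add_one hr0.ne']
      ring
    simp only [Real.norm_eq_abs]
    rw [hUD, show (2 + β - 3 * α : ℝ) = β + 2 - 3*α by ring,
      abs_of_nonneg (Real.rpow_nonneg hr0.le (β + 2 - 3*α))]
    calc |((lam/α + c1) * ((β + 2 - 2*α)/α)) * J r - (c1 * ((β + 1 - 2*α)/α)) * (r * M r)|
        ≤ |((lam/α + c1) * ((β + 2 - 2*α)/α)) * J r| + |(c1 * ((β + 1 - 2*α)/α)) * (r * M r)| :=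
          abs_sub _ _
      _ = |(lam/α + c1) * ((β + 2 - 2*α)/α)| * |J r|
          + |c1 * ((β + 1 - 2*α)/α)| * (r * |M r|) := by
          rw [abs_mul ((lam/α + c1) * ((β + 2 - 2*α)/α)) (J r),
            abs_mul (c1 * ((β + 1 - 2*α)/α)) (r * M r),
            abs_mul r (M r), abs_of_pos hr0]
      _ ≤ |(lam/α + c1) * ((β + 2 - 2*α)/α)|
            * ((1/α + |β + 2 - 3*α| / (α * (α - 1 - (β + 1 - 2*α)))) * r ^ (β + 2 - 3*α))
          + |c1 * ((β + 1 - 2*α)/α)|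
            * (r * ((1/α + |β + 1 - 3*α| / (α * (α - 1 - (β - 2*α)))) * r ^ (β + 1 - 3*α)))
          := by
          refine add_le_add (mul_le_mul_of_nonneg_left hJb (abs_nonneg _)) ?_
          refine mul_le_mul_of_nonneg_left ?_ (abs_nonneg _)
          exact mul_le_mul_of_nonneg_left hMb hr0.le
      _ = (|(lam/α + c1) * ((β + 2 - 2*α)/α)|
            * (1/α + |β + 2 - 3*α| / (α * (α - 1 - (β + 1 - 2*α))))
          + |c1 * ((β + 1 - 2*α)/α)|
            * (1/α + |β + 1 - 3*α| / (α * (α - 1 - (β - 2*α))))) * r ^ (β + 2 - 3*α) := by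
          rw [show r * ((1/α + |β + 1 - 3*α| / (α * (α - 1 - (β - 2*α)))) * r ^ (β + 1 - 3*α))
            = (1/α + |β + 1 - 3*α| / (α * (α - 1 - (β - 2*α)))) * (r * r ^ (β + 1 - 3*α))
            from by ring, hr3]
          ring
end

section
/- Let α > 0, λ ∈ ℝ, and R > 0. Then as r → ∞, ∫_r^∞ (λ² cos(s^α)²)/(α² s²) ds = λ²/(2α² r) + O(r^{-(α+1)}). -/
open MeasureTheory Set Real Filter Asymptotics Topology

lemma aux_integrable {c r : ℝ} (hc : c < -1) (hr : 0 < r) (f : ℝ → ℝ)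
    (hf : Measurable f) (hbd : ∀ x, |f x| ≤ 1) :
    IntegrableOn (fun s => f s * s ^ c) (Ioi r) := by
  have base := integrableOn_Ioi_rpow_of_lt hc hr
  have hm : Measurable fun s : ℝ => f s * s ^ c := by fun_prop
  refine base.mono' hm.aestronglyMeasurable ?_
  rw [ae_restrict_iff' measurableSet_Ioi]
  filter_upwards with x hx
  have hx0 : (0:ℝ) < x := hr.trans hx
  have h1 : ‖f x * x ^ c‖ = |f x| * x ^ c := by
    rw [norm_mul, Real.norm_eq_abs, Real.norm_eq_abs, abs_of_pos (rpow_pos_of_pos hx0 c)]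
  rw [h1]
  calc |f x| * x ^ c ≤ 1 * x ^ c :=
        mul_le_mul_of_nonneg_right (hbd x) (rpow_pos_of_pos hx0 c).le
    _ = x ^ c := one_mul _

lemma aux_deriv {α : ℝ} {s : ℝ} (hs : 0 < s) :
    HasDerivAt (fun x : ℝ => Real.sin (2 * x ^ α) * x ^ (-(α+1)))
      (2 * α * (Real.cos (2 * s ^ α) * s ^ (-(2:ℝ)))
        - (α+1) * (Real.sin (2 * s ^ α) * s ^ (-(α+2)))) s := by
  have hpow : HasDerivAt (fun x : ℝ => x ^ α) (α * s ^ (α - 1)) s :=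
    Real.hasDerivAt_rpow_const (Or.inl hs.ne')
  have hsin : HasDerivAt (fun x : ℝ => Real.sin (2 * x ^ α))
      (Real.cos (2 * s ^ α) * (2 * (α * s ^ (α - 1)))) s :=
    (Real.hasDerivAt_sin _).comp s (hpow.const_mul 2)
  have hneg : HasDerivAt (fun x : ℝ => x ^ (-(α+1))) ((-(α+1)) * s ^ (-(α+1) - 1)) s :=
    Real.hasDerivAt_rpow_const (Or.inl hs.ne')
  have hu := hsin.mul hneg
  refine hu.congr_deriv ?_
  have e1 : s ^ (α - 1) * s ^ (-(α+1)) = s ^ (-(2:ℝ)) := by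
    rw [← Real.rpow_add hs]; congr 1; ring
  have e2 : s ^ (-(α+1) - 1) = s ^ (-(α+2)) := by congr 1; ring
  rw [e2, ← e1]; ring

/-- The oscillatory integral bound. -/
lemma aux_osc {α : ℝ} (hα : 0 < α) {r : ℝ} (hr : 0 < r) :
    |∫ s in Ioi r, Real.cos (2 * s ^ α) * s ^ (-(2:ℝ))| ≤ r ^ (-(α+1)) / α := by
  have hcos : IntegrableOn (fun s => Real.cos (2 * s ^ α) * s ^ (-(2:ℝ))) (Ioi r) :=
    aux_integrable (by norm_num) hr _ (by fun_prop) (fun x => Real.abs_cos_le_one _)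
  have hsin : IntegrableOn (fun s => Real.sin (2 * s ^ α) * s ^ (-(α+2))) (Ioi r) :=
    aux_integrable (by linarith) hr _ (by fun_prop) (fun x => Real.abs_sin_le_one _)
  -- tendsto of u at top
  have hten : Tendsto (fun x : ℝ => Real.sin (2 * x ^ α) * x ^ (-(α+1))) atTop (𝓝 0) := by
    refine squeeze_zero_norm' ?_ (tendsto_rpow_neg_atTop (by linarith : (0:ℝ) < α+1))
    filter_upwards [eventually_gt_atTop (0:ℝ)] with x hx
    rw [norm_mul, Real.norm_eq_abs, Real.norm_eq_abs,
      abs_of_pos (rpow_pos_of_pos hx _)]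
    exact (mul_le_mul_of_nonneg_right (Real.abs_sin_le_one _)
      (rpow_pos_of_pos hx _).le).trans_eq (one_mul _)
  have hFTC : ∫ s in Ioi r,
      (2 * α * (Real.cos (2 * s ^ α) * s ^ (-(2:ℝ)))
        - (α+1) * (Real.sin (2 * s ^ α) * s ^ (-(α+2))))
      = 0 - Real.sin (2 * r ^ α) * r ^ (-(α+1)) := by
    refine integral_Ioi_of_hasDerivAt_of_tendsto' (fun x hx => aux_deriv (hr.trans_le hx))
      ?_ hten
    exact (hcos.const_mul _).sub (hsin.const_mul _)
  rw [integral_sub (hcos.const_mul _) (hsin.const_mul _), integral_const_mul,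
    integral_const_mul, zero_sub] at hFTC
  -- bound on the sine part
  have hBbound : |∫ s in Ioi r, Real.sin (2 * s ^ α) * s ^ (-(α+2))| ≤ r ^ (-(α+1)) / (α+1) := by
    have h1 : ‖∫ s in Ioi r, Real.sin (2 * s ^ α) * s ^ (-(α+2))‖
        ≤ ∫ s in Ioi r, s ^ (-(α+2)) := by
      refine norm_integral_le_of_norm_le (integrableOn_Ioi_rpow_of_lt (by linarith) hr) ?_
      rw [ae_restrict_iff' measurableSet_Ioi]
      filter_upwards with x hx
      have hx0 : (0:ℝ) < x := hr.trans hx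
      rw [norm_mul, Real.norm_eq_abs, Real.norm_eq_abs, abs_of_pos (rpow_pos_of_pos hx0 _)]
      exact (mul_le_mul_of_nonneg_right (Real.abs_sin_le_one _)
        (rpow_pos_of_pos hx0 _).le).trans_eq (one_mul _)
    have h2 : ∫ s in Ioi r, s ^ (-(α+2)) = r ^ (-(α+1)) / (α+1) := by
      rw [integral_Ioi_rpow_of_lt (by linarith) hr]
      rw [show -(α+2) + 1 = -(α+1) by ring]
      rw [neg_div_neg_eq]
    rw [Real.norm_eq_abs] at h1
    linarith
  have hubound : |Real.sin (2 * r ^ α) * r ^ (-(α+1))| ≤ r ^ (-(α+1)) := by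
    rw [abs_mul, abs_of_pos (rpow_pos_of_pos hr _)]
    exact (mul_le_mul_of_nonneg_right (Real.abs_sin_le_one _)
      (rpow_pos_of_pos hr _).le).trans_eq (one_mul _)
  -- conclude
  have key : 2 * α * (∫ s in Ioi r, Real.cos (2 * s ^ α) * s ^ (-(2:ℝ)))
      = -(Real.sin (2 * r ^ α) * r ^ (-(α+1)))
        + (α+1) * ∫ s in Ioi r, Real.sin (2 * s ^ α) * s ^ (-(α+2)) := by
    linarith [hFTC]
  have habs : |2 * α * (∫ s in Ioi r, Real.cos (2 * s ^ α) * s ^ (-(2:ℝ)))|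
      ≤ 2 * r ^ (-(α+1)) := by
    rw [key]
    have h3 : |(α+1) * ∫ s in Ioi r, Real.sin (2 * s ^ α) * s ^ (-(α+2))|
        = (α+1) * |∫ s in Ioi r, Real.sin (2 * s ^ α) * s ^ (-(α+2))| := by
      rw [abs_mul, abs_of_pos (by linarith : (0:ℝ) < α+1)]
    have h4 := abs_add_le (-(Real.sin (2 * r ^ α) * r ^ (-(α+1))))
      ((α+1) * ∫ s in Ioi r, Real.sin (2 * s ^ α) * s ^ (-(α+2)))
    rw [abs_neg, h3] at h4
    have h5 := mul_le_mul_of_nonneg_left hBbound (by linarith : (0:ℝ) ≤ α+1)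
    have h6 : (α+1) * (r ^ (-(α+1)) / (α+1)) = r ^ (-(α+1)) := by field_simp
    linarith
  rw [abs_mul, abs_of_pos (by linarith : (0:ℝ) < 2*α)] at habs
  rw [le_div_iff₀ hα]
  nlinarith [abs_nonneg (∫ s in Ioi r, Real.cos (2 * s ^ α) * s ^ (-(2:ℝ)))]

/-- Tail integral of the effective attractive potential:
∫_r^∞ λ² cos²(s^α)/(α² s²) ds = λ²/(2α² r) + O(r^{-(α+1)}). -/
theorem effective_potential_tail_asymptotics (α lam R : ℝ) (hα : 0 < α) (hR : 0 < R) :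
    (fun r => (∫ s in Ioi r, lam^2 * Real.cos (s ^ α)^2 / (α^2 * s^2))
        - lam^2 / (2 * α^2 * r))
      =O[atTop] fun r => r ^ (-(α + 1)) := by
  rw [isBigO_iff]
  refine ⟨lam^2 / (2 * α^3), ?_⟩
  filter_upwards [eventually_gt_atTop (0:ℝ)] with r hr
  have hA := aux_osc hα hr
  have hcos : IntegrableOn (fun s => Real.cos (2 * s ^ α) * s ^ (-(2:ℝ))) (Ioi r) :=
    aux_integrable (by norm_num) hr _ (by fun_prop) (fun x => Real.abs_cos_le_one _)
  have hconst : IntegrableOn (fun s : ℝ => s ^ (-(2:ℝ))) (Ioi r) :=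
    integrableOn_Ioi_rpow_of_lt (by norm_num) hr
  have heq : (∫ s in Ioi r, lam^2 * Real.cos (s ^ α)^2 / (α^2 * s^2))
      = lam^2 / (2*α^2) * ((1/r) + ∫ s in Ioi r, Real.cos (2 * s ^ α) * s ^ (-(2:ℝ))) := by
    rw [setIntegral_congr_fun (g := fun s =>
        lam^2 / (2*α^2) * (s ^ (-(2:ℝ)) + Real.cos (2 * s ^ α) * s ^ (-(2:ℝ))))
        measurableSet_Ioi ?_]
    · rw [integral_const_mul, integral_add hconst hcos]
      congr 2
      rw [integral_Ioi_rpow_of_lt (by norm_num) hr]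
      norm_num [Real.rpow_neg_one]
    · intro s hs
      have hs0 : (0:ℝ) < s := hr.trans hs
      have h2 : s ^ (-(2:ℝ)) = (s^2)⁻¹ := by
        rw [Real.rpow_neg hs0.le, Real.rpow_two]
      simp only [Real.cos_sq, h2]
      have hs' : s ≠ 0 := hs0.ne'
      have hα' : α ≠ 0 := hα.ne'
      field_simp
      all_goals tauto
  rw [heq]
  have hd : lam^2 / (2*α^2) * ((1/r) + ∫ s in Ioi r, Real.cos (2 * s ^ α) * s ^ (-(2:ℝ)))
      - lam^2 / (2 * α^2 * r)
      = lam^2 / (2*α^2) * ∫ s in Ioi r, Real.cos (2 * s ^ α) * s ^ (-(2:ℝ)) := by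
    field_simp
    ring
  rw [hd, norm_mul, Real.norm_eq_abs, Real.norm_eq_abs, Real.norm_eq_abs,
    abs_of_nonneg (by positivity : (0:ℝ) ≤ lam^2 / (2*α^2)),
    abs_of_pos (rpow_pos_of_pos hr _)]
  calc lam^2 / (2*α^2) * |∫ s in Ioi r, Real.cos (2 * s ^ α) * s ^ (-(2:ℝ))|
      ≤ lam^2 / (2*α^2) * (r ^ (-(α+1)) / α) :=
        mul_le_mul_of_nonneg_left hA (by positivity)
    _ = lam^2 / (2*α^3) * r ^ (-(α+1)) := by
        field_simp
        all_goals tauto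
end

section
/- Let η > 0, ε ≥ 0, R > e, and for E ∈ (0,1) set Q_E(t) = η - E e^{2t} + ε/t². Let t_0(E) be the largest solution of Q_E(t) = 0 in (ln R, ∞) (which exists for all small E). Then t_0(E) = |ln E|/2 + O(1) as E ↓ 0, and ∫_{ln R}^{t_0(E)} √(max(Q_E(t),0)) dt = (√η/2)|ln E| + O(1) as E ↓ 0. -/
open MeasureTheory Set Real Filter Asymptotics
set_option maxHeartbeats 1000000

private lemma abs_sqrt_sub_sqrt_le {a b : ℝ} (ha : 0 ≤ a) (hb : 0 < b) :
    |Real.sqrt a - Real.sqrt b| ≤ |a - b| / Real.sqrt b := by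
  have hsb : 0 < Real.sqrt b := Real.sqrt_pos.mpr hb
  have h1 : Real.sqrt a ^ 2 = a := Real.sq_sqrt ha
  have h2 : Real.sqrt b ^ 2 = b := Real.sq_sqrt hb.le
  have hnn : (0:ℝ) ≤ Real.sqrt a + Real.sqrt b := by positivity
  have key : |Real.sqrt a - Real.sqrt b| * (Real.sqrt a + Real.sqrt b) = |a - b| := by
    rw [← abs_of_nonneg hnn, ← abs_mul]
    congr 1
    linear_combination h1 - h2
  calc |Real.sqrt a - Real.sqrt b|
      = |Real.sqrt a - Real.sqrt b| * Real.sqrt b / Real.sqrt b := by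
        field_simp
    _ ≤ |Real.sqrt a - Real.sqrt b| * (Real.sqrt a + Real.sqrt b) / Real.sqrt b := by
        have : Real.sqrt b ≤ Real.sqrt a + Real.sqrt b := by linarith [Real.sqrt_nonneg a]
        gcongr
    _ = |a - b| / Real.sqrt b := by rw [key]

/-- Phase integral asymptotics for Q_E(t) = η - E e^{2t} + ε/t²:
the largest zero t₀(E) satisfies t₀(E) = |ln E|/2 + O(1), and
∫_{ln R}^{t₀(E)} √(Q_E)₊ dt = (√η/2)|ln E| + O(1) as E ↓ 0. -/
theorem phase_integral_asymptotics (η ε R : ℝ) (hη : 0 < η) (hε : 0 ≤ ε)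
    (hR : Real.exp 1 < R) :
    ∃ E₀ : ℝ, 0 < E₀ ∧ E₀ < 1 ∧ ∃ t₀ : ℝ → ℝ,
      (∀ E : ℝ, E ∈ Ioo 0 E₀ →
        t₀ E ∈ Ioi (Real.log R)
        ∧ η - E * Real.exp (2 * t₀ E) + ε / (t₀ E)^2 = 0
        ∧ ∀ t ∈ Ioi (Real.log R),
            η - E * Real.exp (2 * t) + ε / t^2 = 0 → t ≤ t₀ E)
      ∧ (fun E => t₀ E - |Real.log E| / 2) =O[nhdsWithin 0 (Ioi 0)] (fun _ => (1:ℝ))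
      ∧ (fun E =>
          (∫ t in Real.log R..t₀ E,
            Real.sqrt (max (η - E * Real.exp (2 * t) + ε / t^2) 0))
          - Real.sqrt η / 2 * |Real.log E|)
          =O[nhdsWithin 0 (Ioi 0)] (fun _ => (1:ℝ)) := by
  have hR1 : (1:ℝ) < R := lt_trans (by linarith [Real.add_one_le_exp (1:ℝ)]) hR
  have hR0 : (0:ℝ) < R := by linarith
  set L := Real.log R with hLdef
  have hL : 1 < L := (Real.lt_log_iff_exp_lt hR0).mpr hR
  have hL0 : 0 < L := by linarith
  set M := η + ε / L ^ 2 with hMdef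
  have hMη : η ≤ M := le_add_of_nonneg_right (by positivity)
  have hM0 : 0 < M := lt_of_lt_of_le hη hMη
  set Q : ℝ → ℝ → ℝ := fun E t => η - E * Real.exp (2 * t) + ε / t ^ 2 with hQdef
  set E₀ : ℝ := min (η / R ^ 2) 1 / 2 with hE₀def
  have hE₀pos : 0 < E₀ := by
    have : 0 < min (η / R ^ 2) 1 := lt_min (by positivity) one_pos
    positivity
  have hE₀1 : E₀ < 1 := by
    have : min (η / R ^ 2) 1 ≤ 1 := min_le_right _ _
    rw [hE₀def]; linarith
  -- basic facts for E in range
  have hEη : ∀ E ∈ Ioo (0:ℝ) E₀, E * R ^ 2 < η := by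
    intro E hE
    have h1 : E < η / R ^ 2 := by
      have : E₀ ≤ (η / R ^ 2) / 2 := by
        rw [hE₀def]; gcongr; exact min_le_left _ _
      have h2 : (η / R ^ 2) / 2 < η / R ^ 2 := by
        have : 0 < η / R ^ 2 := by positivity
        linarith
      linarith [hE.2]
    calc E * R ^ 2 < (η / R ^ 2) * R ^ 2 := by gcongr
      _ = η := by field_simp
  have hQanti : ∀ E : ℝ, 0 < E → ∀ t₁ t₂ : ℝ, 0 < t₁ → t₁ < t₂ → Q E t₂ < Q E t₁ := by
    intro E hE t₁ t₂ ht₁ hlt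
    have h1 : E * Real.exp (2 * t₁) < E * Real.exp (2 * t₂) :=
      mul_lt_mul_of_pos_left (Real.exp_lt_exp.mpr (by linarith)) hE
    have h2 : ε / t₂ ^ 2 ≤ ε / t₁ ^ 2 := by gcongr
    simp only [hQdef]
    linarith
  have hexpL : Real.exp (2 * L) = R ^ 2 := by
    rw [two_mul, Real.exp_add, Real.exp_log hR0]; ring
  have hQLpos : ∀ E ∈ Ioo (0:ℝ) E₀, 0 < Q E L := by
    intro E hE
    have := hEη E hE
    simp only [hQdef, hexpL]
    have : 0 ≤ ε / L ^ 2 := by positivity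
    linarith [hEη E hE]
  have hexist : ∀ E ∈ Ioo (0:ℝ) E₀, ∃ t, t ∈ Ioi L ∧ Q E t = 0 := by
    intro E hE
    obtain ⟨hE0, hElt⟩ := hE
    have hRsq : 1 < R ^ 2 := by nlinarith
    have hEM : E < M := by
      have h := hEη E ⟨hE0, hElt⟩
      nlinarith
    set T : ℝ := L + Real.log (M / E) / 2 with hTdef
    have hlogME : 0 < Real.log (M / E) := Real.log_pos (by
      rw [lt_div_iff₀ hE0]; linarith)
    have hLT : L < T := by rw [hTdef]; linarith
    have hexpT : Real.exp (2 * T) = R ^ 2 * (M / E) := by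
      rw [hTdef]
      rw [show 2 * (L + Real.log (M / E) / 2) = 2 * L + Real.log (M / E) by ring]
      rw [Real.exp_add, hexpL, Real.exp_log (by positivity)]
    have hQT : Q E T ≤ 0 := by
      have h1 : E * Real.exp (2 * T) = R ^ 2 * M := by
        rw [hexpT]; field_simp
      have h2 : ε / T ^ 2 ≤ ε / L ^ 2 := by gcongr
      have h3 : M ≤ R ^ 2 * M := by nlinarith [mul_pos hM0 (show (0:ℝ) < R ^ 2 - 1 by nlinarith)]
      simp only [hQdef]
      rw [h1] at *
      simp only [hMdef] at h3 ⊢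
      linarith
    have hcont : ContinuousOn (Q E) (Icc L T) := by
      apply ContinuousOn.add
      · fun_prop
      · exact continuousOn_const.div (by fun_prop)
          (fun t ht => by have h := lt_of_lt_of_le hL0 ht.1; positivity)
    have h0mem : (0:ℝ) ∈ Icc (Q E T) (Q E L) := ⟨hQT, (hQLpos E ⟨hE0, hElt⟩).le⟩
    obtain ⟨t, htmem, ht0⟩ := intermediate_value_Icc' hLT.le hcont h0mem
    refine ⟨t, ?_, ht0⟩
    rcases eq_or_lt_of_le htmem.1 with h | h
    · exfalso; rw [← h] at ht0; linarith [hQLpos E ⟨hE0, hElt⟩]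
    · exact h
  set t₀ : ℝ → ℝ := fun E => if h : E ∈ Ioo (0:ℝ) E₀ then (hexist E h).choose else L + 1
    with ht₀def
  have ht₀spec : ∀ E (h : E ∈ Ioo (0:ℝ) E₀), t₀ E ∈ Ioi L ∧ Q E (t₀ E) = 0 := by
    intro E h
    simp only [ht₀def, dif_pos h]
    exact (hexist E h).choose_spec
  -- quantitative bounds
  have hEe : ∀ E ∈ Ioo (0:ℝ) E₀,
      η ≤ E * Real.exp (2 * t₀ E) ∧ E * Real.exp (2 * t₀ E) ≤ M := by
    intro E hE
    obtain ⟨hmem, hzero⟩ := ht₀spec E hE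
    have ht₀L : L < t₀ E := hmem
    have h1 : E * Real.exp (2 * t₀ E) = η + ε / (t₀ E) ^ 2 := by
      simp only [hQdef] at hzero; linarith
    constructor
    · rw [h1]
      have h2 : 0 ≤ ε / (t₀ E) ^ 2 := by positivity
      linarith
    · rw [h1, hMdef]
      have h2 : ε / (t₀ E) ^ 2 ≤ ε / L ^ 2 := by gcongr
      linarith
  have ht₀bd : ∀ E ∈ Ioo (0:ℝ) E₀,
      Real.log η / 2 ≤ t₀ E + Real.log E / 2 ∧ t₀ E + Real.log E / 2 ≤ Real.log M / 2 := by
    intro E hE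
    obtain ⟨hlo, hhi⟩ := hEe E hE
    have hE0 : 0 < E := hE.1
    have hlog : Real.log (E * Real.exp (2 * t₀ E)) = Real.log E + 2 * t₀ E := by
      rw [Real.log_mul hE0.ne' (Real.exp_ne_zero _), Real.log_exp]
    constructor
    · have := Real.log_le_log hη hlo
      rw [hlog] at this; linarith
    · have := Real.log_le_log (by positivity) hhi
      rw [hlog] at this; linarith
  have hlogEneg : ∀ E ∈ Ioo (0:ℝ) E₀, Real.log E < 0 :=
    fun E hE => Real.log_neg hE.1 (hE.2.trans hE₀1)
  set C₁ : ℝ := (|Real.log η| + |Real.log M|) / 2 with hC₁def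
  have ht₀abs : ∀ E ∈ Ioo (0:ℝ) E₀, |t₀ E - |Real.log E| / 2| ≤ C₁ := by
    intro E hE
    obtain ⟨h1, h2⟩ := ht₀bd E hE
    rw [abs_of_neg (hlogEneg E hE)]
    have heq : t₀ E - -Real.log E / 2 = t₀ E + Real.log E / 2 := by ring
    rw [heq, abs_le]
    constructor
    · have := neg_abs_le (Real.log η); rw [hC₁def]
      have := abs_nonneg (Real.log M); linarith [neg_abs_le (Real.log η)]
    · have := le_abs_self (Real.log M); rw [hC₁def]
      have := abs_nonneg (Real.log η); linarith [le_abs_self (Real.log M)]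
  refine ⟨E₀, hE₀pos, hE₀1, t₀, ?_, ?_, ?_⟩
  · intro E hE
    obtain ⟨hmem, hzero⟩ := ht₀spec E hE
    refine ⟨hmem, hzero, ?_⟩
    intro t htmem htzero
    by_contra hcon
    push_neg at hcon
    have := hQanti E hE.1 (t₀ E) t (lt_trans hL0 hmem) hcon
    rw [hzero] at this
    simp only [hQdef] at this htzero
    linarith
  · rw [Asymptotics.isBigO_iff]
    refine ⟨C₁, ?_⟩
    filter_upwards [Ioo_mem_nhdsGT_of_mem (left_mem_Ico.mpr hE₀pos)] with E hE
    simpa using ht₀abs E hE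
  · -- integral asymptotics
    set C₂ : ℝ := (M / 2 + ε) / Real.sqrt η with hC₂def
    set C : ℝ := C₂ + Real.sqrt η * (C₁ + |L|) with hCdef
    clear_value L M Q t₀ C₁ C₂ C
    have hsqη : 0 < Real.sqrt η := Real.sqrt_pos.mpr hη
    rw [Asymptotics.isBigO_iff]
    refine ⟨C, ?_⟩
    filter_upwards [Ioo_mem_nhdsGT_of_mem (left_mem_Ico.mpr hE₀pos)] with E hE
    simp only [norm_one, mul_one, Real.norm_eq_abs]
    obtain ⟨hmem, hzero⟩ := ht₀spec E hE
    set b := t₀ E with hbdef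
    have hLb : L ≤ b := le_of_lt hmem
    have hbpos : 0 < b := lt_trans hL0 hmem
    have hE0 : 0 < E := hE.1
    obtain ⟨hEelo, hEehi⟩ := hEe E hE
    rw [← hbdef] at hEelo hEehi
    clear_value b
    have hcontQ : ContinuousOn (fun t => η - E * Real.exp (2 * t) + ε / t ^ 2) (Icc L b) := by
      apply ContinuousOn.add
      · fun_prop
      · exact continuousOn_const.div (by fun_prop)
          (fun t ht => by have h := lt_of_lt_of_le hL0 ht.1; positivity)
    have hf_cont : ContinuousOn
        (fun t => Real.sqrt (max (η - E * Real.exp (2 * t) + ε / t ^ 2) 0)) (Icc L b) :=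
      Real.continuous_sqrt.comp_continuousOn ((continuous_id.max continuous_const).comp_continuousOn hcontQ)
    have hf_int : IntervalIntegrable
        (fun t => Real.sqrt (max (η - E * Real.exp (2 * t) + ε / t ^ 2) 0)) volume L b :=
      (uIcc_of_le hLb ▸ hf_cont).intervalIntegrable
    have hexp_int : IntervalIntegrable (fun t => E * Real.exp (2 * t)) volume L b := by
      apply Continuous.intervalIntegrable; fun_prop
    have hinv_cont : ContinuousOn (fun t => ε / t ^ 2) (Icc L b) :=
      continuousOn_const.div (by fun_prop)
        (fun t ht => by have h := lt_of_lt_of_le hL0 ht.1; positivity)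
    have hinv_int : IntervalIntegrable (fun t => ε / t ^ 2) volume L b :=
      (uIcc_of_le hLb ▸ hinv_cont).intervalIntegrable
    have hIexp : (∫ t in L..b, E * Real.exp (2 * t))
        = E * Real.exp (2 * b) / 2 - E * Real.exp (2 * L) / 2 := by
      have hderiv : ∀ t ∈ uIcc L b,
          HasDerivAt (fun t => E * Real.exp (2 * t) / 2) (E * Real.exp (2 * t)) t := by
        intro t _
        have h1 : HasDerivAt (fun t : ℝ => 2 * t) 2 t := by
          simpa using (hasDerivAt_id t).const_mul (2:ℝ)
        have h2 := (h1.exp.const_mul E).div_const 2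
        exact h2.congr_deriv (by ring)
      exact intervalIntegral.integral_eq_sub_of_hasDerivAt hderiv hexp_int
    have hIinv : (∫ t in L..b, ε / t ^ 2) = ε / L - ε / b := by
      have hderiv : ∀ t ∈ uIcc L b, HasDerivAt (fun t => -(ε / t)) (ε / t ^ 2) t := by
        intro t ht
        rw [uIcc_of_le hLb] at ht
        have ht0 : t ≠ 0 := (lt_of_lt_of_le hL0 ht.1).ne'
        have h1 := ((hasDerivAt_inv ht0).const_mul ε).neg
        have heq : (fun t : ℝ => -(ε / t)) = fun t : ℝ => -(ε * t⁻¹) := by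
          funext x; rw [div_eq_mul_inv]
        rw [heq]
        exact h1.congr_deriv (by field_simp)
      have h2 := intervalIntegral.integral_eq_sub_of_hasDerivAt hderiv hinv_int
      rw [h2]; ring
    have hpt : ∀ t ∈ Icc L b,
        |Real.sqrt (max (η - E * Real.exp (2 * t) + ε / t ^ 2) 0) - Real.sqrt η|
          ≤ (E * Real.exp (2 * t) + ε / t ^ 2) / Real.sqrt η := by
      intro t ht
      have ht0 : 0 < t := lt_of_lt_of_le hL0 ht.1
      have hnn1 : 0 ≤ E * Real.exp (2 * t) := by positivity
      have hnn2 : 0 ≤ ε / t ^ 2 := by positivity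
      rcases le_or_gt 0 (η - E * Real.exp (2 * t) + ε / t ^ 2) with hq | hq
      · rw [max_eq_left hq]
        refine le_trans (abs_sqrt_sub_sqrt_le hq hη) ?_
        gcongr
        have heq2 : η - E * Real.exp (2 * t) + ε / t ^ 2 - η
            = ε / t ^ 2 - E * Real.exp (2 * t) := by ring
        rw [heq2, abs_le]
        constructor <;> linarith
      · rw [max_eq_right hq.le, Real.sqrt_zero, zero_sub, abs_neg,
          abs_of_nonneg (Real.sqrt_nonneg _)]
        have hηle : η ≤ E * Real.exp (2 * t) := by linarith
        calc Real.sqrt η = η / Real.sqrt η := (Real.div_sqrt).symm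
          _ ≤ (E * Real.exp (2 * t) + ε / t ^ 2) / Real.sqrt η := by
              gcongr
              linarith
    have habs_int : IntervalIntegrable
        (fun t => |Real.sqrt (max (η - E * Real.exp (2 * t) + ε / t ^ 2) 0) - Real.sqrt η|)
        volume L b := (hf_int.sub intervalIntegrable_const).abs
    have hg_int : IntervalIntegrable
        (fun t => (E * Real.exp (2 * t) + ε / t ^ 2) / Real.sqrt η) volume L b :=
      by exact (hexp_int.add hinv_int).div_const (Real.sqrt η)
    have key : |(∫ t in L..b, Real.sqrt (max (η - E * Real.exp (2 * t) + ε / t ^ 2) 0))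
        - Real.sqrt η * (b - L)| ≤ C₂ := by
      have h1 : (∫ t in L..b, Real.sqrt (max (η - E * Real.exp (2 * t) + ε / t ^ 2) 0))
          - Real.sqrt η * (b - L)
          = ∫ t in L..b,
              (Real.sqrt (max (η - E * Real.exp (2 * t) + ε / t ^ 2) 0) - Real.sqrt η) := by
        rw [intervalIntegral.integral_sub hf_int intervalIntegrable_const,
          intervalIntegral.integral_const, smul_eq_mul]
        ring
      rw [h1]
      have h2 : |∫ t in L..b,
            (Real.sqrt (max (η - E * Real.exp (2 * t) + ε / t ^ 2) 0) - Real.sqrt η)|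
          ≤ ∫ t in L..b,
            |Real.sqrt (max (η - E * Real.exp (2 * t) + ε / t ^ 2) 0) - Real.sqrt η| := by
        simpa [Real.norm_eq_abs] using
          intervalIntegral.norm_integral_le_integral_norm
            (f := fun t => Real.sqrt (max (η - E * Real.exp (2 * t) + ε / t ^ 2) 0)
              - Real.sqrt η) hLb
      refine le_trans h2 (le_trans
        (intervalIntegral.integral_mono_on hLb habs_int hg_int hpt) ?_)
      have h3 : (∫ t in L..b, (E * Real.exp (2 * t) + ε / t ^ 2) / Real.sqrt η)
          = ((E * Real.exp (2 * b) / 2 - E * Real.exp (2 * L) / 2) + (ε / L - ε / b))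
            / Real.sqrt η := by
        rw [intervalIntegral.integral_div,
          intervalIntegral.integral_add hexp_int hinv_int, hIexp, hIinv]
      rw [h3, hC₂def]
      have n2 : 0 ≤ E * Real.exp (2 * L) := by positivity
      have n3 : ε / L ≤ ε := div_le_self hε hL.le
      have n4 : 0 ≤ ε / b := by positivity
      rw [div_le_div_iff_of_pos_right hsqη]
      linarith
    have hlE : |Real.log E| = -Real.log E := abs_of_neg (hlogEneg E hE)
    have habs2 : |b + Real.log E / 2| ≤ C₁ := by
      have h := ht₀abs E hE
      rw [hlE, show t₀ E - -Real.log E / 2 = t₀ E + Real.log E / 2 from by ring,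
        ← hbdef] at h
      exact h
    have heq : (∫ t in L..b, Real.sqrt (max (η - E * Real.exp (2 * t) + ε / t ^ 2) 0))
        - Real.sqrt η / 2 * |Real.log E|
        = ((∫ t in L..b, Real.sqrt (max (η - E * Real.exp (2 * t) + ε / t ^ 2) 0))
            - Real.sqrt η * (b - L))
          + Real.sqrt η * ((b + Real.log E / 2) - L) := by
      rw [hlE]; ring
    rw [heq]
    refine le_trans (abs_add_le _ _) ?_
    have hB : |Real.sqrt η * ((b + Real.log E / 2) - L)| ≤ Real.sqrt η * (C₁ + |L|) := by
      rw [abs_mul, abs_of_nonneg (Real.sqrt_nonneg _)]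
      gcongr
      rw [sub_eq_add_neg]
      refine le_trans (abs_add_le _ _) ?_
      rw [abs_neg]
      linarith
    rw [hCdef]
    linarith
end
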